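/- arXiv:1407.1169 — 11 statements merged into one kernel-verified Lean document; each statement's English description precedes it below -/
import Mathlib

section
/- Let H be a Hermitian N×N complex matrix, let U be a unitary matrix such that U H U† is diagonal, and let F be a complex Hadamard matrix of order N. Then for every unitary matrix V of order N, the sum over all off-diagonal positions (i,j), i ≠ j, of |(V H V†)_{ij}|² is at most the corresponding off-diagonal sum for ((F U) H (F U)†); that is, the maximum of the squared off-diagonal Hilbert–Schmidt weight over the unitary orbit of H is attained at V = F U. -/
open Matrix

lemma sum_diag_univ {N : ℕ} (f : Fin N × Fin N → ℝ) :
    ∑ p ∈ (Finset.univ : Finset (Fin N)).diag, f p = ∑ i, f (i, i) := by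
  have h : (Finset.univ : Finset (Fin N)).diag =
      Finset.univ.image (fun i => (i, i)) := by
    ext p
    simp only [Finset.mem_diag, Finset.mem_image, Finset.mem_univ, true_and]
    constructor
    · rintro h; exact ⟨p.1, by rw [Prod.ext_iff]; exact ⟨rfl, h⟩⟩
    · rintro ⟨i, rfl⟩; rfl
  rw [h, Finset.sum_image]
  intro a _ b _ hab
  simpa using congrArg Prod.fst hab

lemma sum_offDiag_split {N : ℕ} (f : Fin N × Fin N → ℝ) :
    ∑ p ∈ (Finset.univ : Finset (Fin N)).offDiag, f p =
      (∑ i, ∑ j, f (i, j)) - ∑ i, f (i, i) := by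
  have h := Finset.sum_union (f := f)
    (Finset.disjoint_diag_offDiag (Finset.univ : Finset (Fin N)))
  rw [Finset.diag_union_offDiag, Finset.sum_product, sum_diag_univ] at h
  linarith

lemma norm_sq_eq_star_mul_re (z : ℂ) : ‖z‖ ^ 2 = (star z * z).re := by
  have h : star z * z = (Complex.normSq z : ℂ) := by
    rw [mul_comm]; exact Complex.mul_conj z
  rw [h, Complex.ofReal_re, Complex.sq_norm]

/-- trace formula for Frobenius norm -/
lemma frob_eq_trace {N : ℕ} (G : Matrix (Fin N) (Fin N) ℂ) :
    ∑ i, ∑ j, ‖G i j‖ ^ 2 = (Matrix.trace (Gᴴ * G)).re := by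
  rw [Matrix.trace]
  simp only [Matrix.diag, Matrix.mul_apply, Matrix.conjTranspose_apply]
  rw [Complex.re_sum, Finset.sum_comm]
  congr 1; ext i
  rw [Complex.re_sum]
  congr 1; ext j
  exact norm_sq_eq_star_mul_re (G j i)

lemma trace_conj_invariant {N : ℕ} (H W : Matrix (Fin N) (Fin N) ℂ)
    (hW : W ∈ Matrix.unitaryGroup (Fin N) ℂ) :
    Matrix.trace ((W * H * Wᴴ)ᴴ * (W * H * Wᴴ)) = Matrix.trace (Hᴴ * H) := by
  have h1 : Wᴴ * W = 1 := by
    have := hW.1; rwa [Matrix.star_eq_conjTranspose] at this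
  have h2 : (W * H * Wᴴ)ᴴ * (W * H * Wᴴ) = W * (Hᴴ * H) * Wᴴ := by
    have hc : (W * H * Wᴴ)ᴴ = W * Hᴴ * Wᴴ := by
      simp [Matrix.conjTranspose_mul, Matrix.mul_assoc]
    rw [hc]
    calc W * Hᴴ * Wᴴ * (W * H * Wᴴ)
        = W * Hᴴ * (Wᴴ * W) * (H * Wᴴ) := by simp only [Matrix.mul_assoc]
      _ = W * (Hᴴ * H) * Wᴴ := by rw [h1, Matrix.mul_one]; simp only [Matrix.mul_assoc]
  rw [h2, Matrix.trace_mul_comm, ← Matrix.mul_assoc, h1, Matrix.one_mul]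

lemma trace_similar {N : ℕ} (H W : Matrix (Fin N) (Fin N) ℂ)
    (hW : W ∈ Matrix.unitaryGroup (Fin N) ℂ) :
    Matrix.trace (W * H * Wᴴ) = Matrix.trace H := by
  have h1 : Wᴴ * W = 1 := by
    have := hW.1; rwa [Matrix.star_eq_conjTranspose] at this
  rw [Matrix.trace_mul_comm, ← Matrix.mul_assoc, h1, Matrix.one_mul]

/-- For a Hermitian `H`, unitary `U` diagonalizing `H`, and a complex
Hadamard matrix `F`, the off-diagonal squared Hilbert–Schmidt weight over the unitary
orbit of `H` is maximized at `V = F * U`. -/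
theorem offdiag_weight_max_at_hadamard (N : ℕ) (hN : 0 < N)
    (H U F : Matrix (Fin N) (Fin N) ℂ)
    (hH : H.IsHermitian)
    (hU : U ∈ Matrix.unitaryGroup (Fin N) ℂ)
    (hUdiag : (U * H * Uᴴ).IsDiag)
    (hF : F ∈ Matrix.unitaryGroup (Fin N) ℂ)
    (hFmod : ∀ j k, ‖F j k‖ = 1 / Real.sqrt N) :
    ∀ V ∈ Matrix.unitaryGroup (Fin N) ℂ,
      ∑ p ∈ Finset.univ.offDiag, ‖(V * H * Vᴴ) p.1 p.2‖ ^ 2 ≤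
        ∑ p ∈ Finset.univ.offDiag, ‖((F * U) * H * (F * U)ᴴ) p.1 p.2‖ ^ 2 := by
  intro V hV
  set D := U * H * Uᴴ with hD
  have hFU : F * U ∈ Matrix.unitaryGroup (Fin N) ℂ := Submonoid.mul_mem _ hF hU
  have htotal : ∀ W ∈ Matrix.unitaryGroup (Fin N) ℂ,
      ∑ i, ∑ j, ‖(W * H * Wᴴ) i j‖ ^ 2 = (Matrix.trace (Hᴴ * H)).re := by
    intro W hW
    rw [frob_eq_trace, trace_conj_invariant H W hW]
  have hFUdiag : ∀ i, ((F * U) * H * (F * U)ᴴ) i i = Matrix.trace H / N := by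
    intro i
    have hrw : (F * U) * H * (F * U)ᴴ = F * D * Fᴴ := by
      simp only [hD, Matrix.conjTranspose_mul]; noncomm_ring
    rw [hrw]
    have hmod2 : ∀ j k, (F j k) * star (F j k) = (1 / N : ℂ) := by
      intro j k
      rw [show (star (F j k)) = (starRingEnd ℂ) (F j k) from rfl, Complex.mul_conj]
      have hns : Complex.normSq (F j k) = 1 / N := by
        have h2 : Complex.normSq (F j k) = ‖F j k‖ ^ 2 := by
          rw [Complex.sq_norm]
        rw [h2, hFmod j k, div_pow, one_pow, Real.sq_sqrt (Nat.cast_nonneg N)]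
      rw [hns]; push_cast; ring
    have hentry : (F * D * Fᴴ) i i = ∑ k, (F i k * star (F i k)) * D k k := by
      simp only [Matrix.mul_apply, Matrix.conjTranspose_apply]
      congr 1; ext k
      rw [Finset.sum_mul, Finset.sum_eq_single k]
      · ring
      · intro j _ hjk; rw [hUdiag hjk]; ring
      · intro h; exact absurd (Finset.mem_univ k) h
    rw [hentry]
    have htr : ∑ k, (F i k * star (F i k)) * D k k = (1 / N : ℂ) * Matrix.trace D := by
      rw [Matrix.trace, Finset.mul_sum]
      congr 1; ext k
      rw [hmod2 i k]; rfl
    rw [htr, hD, trace_similar H U hU]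
    ring
  have hNR : (0:ℝ) < N := by exact_mod_cast hN
  have hdiagFU : ∑ i, ‖((F * U) * H * (F * U)ᴴ) i i‖ ^ 2
      = ‖Matrix.trace H‖ ^ 2 / N := by
    have he : ∀ i : Fin N, ‖((F * U) * H * (F * U)ᴴ) i i‖ ^ 2
        = ‖Matrix.trace H‖ ^ 2 / N ^ 2 := by
      intro i
      rw [hFUdiag i, norm_div]
      simp [div_pow]
    rw [Finset.sum_congr rfl (fun i _ => he i)]
    simp only [Finset.sum_const, Finset.card_univ, Fintype.card_fin, nsmul_eq_mul]
    field_simp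
  have hdiagV : ‖Matrix.trace H‖ ^ 2 / N ≤ ∑ i, ‖(V * H * Vᴴ) i i‖ ^ 2 := by
    have htr : Matrix.trace (V * H * Vᴴ) = Matrix.trace H := trace_similar H V hV
    have h1 : ‖Matrix.trace H‖ ≤ ∑ i, ‖(V * H * Vᴴ) i i‖ := by
      rw [← htr, Matrix.trace]
      exact norm_sum_le _ _
    have h2 : (∑ i, ‖(V * H * Vᴴ) i i‖) ^ 2
        ≤ N * ∑ i, ‖(V * H * Vᴴ) i i‖ ^ 2 := by
      have := sq_sum_le_card_mul_sum_sq
        (s := (Finset.univ : Finset (Fin N))) (f := fun i => ‖(V * H * Vᴴ) i i‖)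
      simpa using this
    have h3 : ‖Matrix.trace H‖ ^ 2 ≤ N * ∑ i, ‖(V * H * Vᴴ) i i‖ ^ 2 := by
      calc ‖Matrix.trace H‖ ^ 2 ≤ (∑ i, ‖(V * H * Vᴴ) i i‖) ^ 2 :=
            pow_le_pow_left₀ (norm_nonneg _) h1 2
        _ ≤ _ := h2
    rw [div_le_iff₀ hNR]
    linarith
  rw [sum_offDiag_split, sum_offDiag_split,
    htotal V hV, htotal (F * U) hFU, hdiagFU]
  linarith
end

section
/- Let H be a Hermitian N×N complex matrix, let U be a unitary matrix such that U H U† is diagonal, and let F be a complex Hadamard matrix of order N. Then the matrix A = (F U) H (F U)† is contradiagonal: every diagonal entry of A equals (Tr H)/N. -/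
open Matrix

/-- If `U` diagonalizes the Hermitian matrix `H` and `F` is a complex
Hadamard matrix, then `A = (F*U) * H * (F*U)ᴴ` is contradiagonal: every diagonal
entry equals `(Tr H)/N`. -/
theorem hadamard_conjugate_contradiagonal (N : ℕ) (hN : 0 < N)
    (H U F : Matrix (Fin N) (Fin N) ℂ)
    (hH : H.IsHermitian)
    (hU : U ∈ Matrix.unitaryGroup (Fin N) ℂ)
    (hUdiag : (U * H * Uᴴ).IsDiag)
    (hF : F ∈ Matrix.unitaryGroup (Fin N) ℂ)
    (hFmod : ∀ j k, ‖F j k‖ = 1 / Real.sqrt N) :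
    ∀ i, ((F * U) * H * (F * U)ᴴ) i i = Matrix.trace H / N := by
  intro i
  set D := U * H * Uᴴ with hD
  have hA : (F * U) * H * (F * U)ᴴ = F * D * Fᴴ := by
    simp only [conjTranspose_mul, hD, Matrix.mul_assoc]
  rw [hA]
  have htr : Matrix.trace D = Matrix.trace H := by
    have hUU : Uᴴ * U = 1 := (mem_unitaryGroup_iff'.mp hU)
    calc Matrix.trace D = Matrix.trace (Uᴴ * (U * H)) := by
          rw [hD, Matrix.trace_mul_comm (U * H) Uᴴ]
      _ = Matrix.trace H := by rw [← Matrix.mul_assoc, hUU, Matrix.one_mul]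
  rw [← htr]
  have hentry : (F * D * Fᴴ) i i = ∑ k, F i k * D k k * star (F i k) := by
    rw [Matrix.mul_apply]
    congr 1
    ext k
    rw [Matrix.mul_apply, Matrix.conjTranspose_apply]
    rw [Finset.sum_mul]
    rw [Finset.sum_eq_single k]
    · intro j _ hj
      simp [hUdiag hj]
    · intro h; exact absurd (Finset.mem_univ k) h
  rw [hentry]
  have hmod : ∀ k : Fin N, F i k * star (F i k) = (1 : ℂ) / N := by
    intro k
    rw [Complex.star_def, Complex.mul_conj]
    rw [Complex.normSq_eq_norm_sq]
    have := hFmod i k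
    rw [this]
    have hNpos : (0:ℝ) < N := Nat.cast_pos.mpr hN
    rw [div_pow, one_pow, Real.sq_sqrt hNpos.le]
    push_cast
    ring
  have : ∑ k, F i k * D k k * star (F i k) = ∑ k, D k k * (1 / N : ℂ) := by
    apply Finset.sum_congr rfl
    intro k _
    rw [mul_comm (F i k) (D k k), mul_assoc, hmod k]
  rw [this, ← Finset.sum_mul]
  rw [Matrix.trace]
  simp [Matrix.diag]
  ring
end

section
/- Let H be a Hermitian N×N complex matrix. Then the maximum over all unitary matrices V of order N of Σ_{i≠j} |(V H V†)_{ij}|² equals Tr(H²) − (Tr H)²/N; i.e., this value is an upper bound for every unitary V, and it is attained by some unitary V (namely V = F U with U H U† diagonal and F a complex Hadamard matrix). -/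
open Matrix Finset

/- ### Auxiliary lemmas -/

section Aux

variable {N : ℕ}

private lemma aux_conj_mul (V H : Matrix (Fin N) (Fin N) ℂ)
    (hV : V ∈ Matrix.unitaryGroup (Fin N) ℂ) :
    (V * H * Vᴴ) * (V * H * Vᴴ) = V * (H * H) * Vᴴ := by
  have h1 : Vᴴ * V = 1 := by
    have := (Matrix.mem_unitaryGroup_iff').mp hV
    simpa [Matrix.star_eq_conjTranspose] using this
  calc (V * H * Vᴴ) * (V * H * Vᴴ) = V * H * (Vᴴ * V) * H * Vᴴ := by
        simp only [Matrix.mul_assoc]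
    _ = V * (H * H) * Vᴴ := by rw [h1]; simp only [Matrix.mul_one, Matrix.mul_assoc]

private lemma aux_trace_conj (V H : Matrix (Fin N) (Fin N) ℂ)
    (hV : V ∈ Matrix.unitaryGroup (Fin N) ℂ) :
    Matrix.trace (V * H * Vᴴ) = Matrix.trace H := by
  have h1 : Vᴴ * V = 1 := by
    have := (Matrix.mem_unitaryGroup_iff').mp hV
    simpa [Matrix.star_eq_conjTranspose] using this
  rw [Matrix.trace_mul_cycle, h1, Matrix.one_mul]

private lemma aux_split (G : Matrix (Fin N) (Fin N) ℂ) :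
    ∑ p ∈ (univ : Finset (Fin N)).offDiag, ‖G p.1 p.2‖ ^ 2 =
      (∑ p ∈ univ ×ˢ univ, ‖G p.1 p.2‖ ^ 2) - ∑ i, ‖G i i‖ ^ 2 := by
  rw [← Finset.diag_union_offDiag, Finset.sum_union (Finset.disjoint_diag_offDiag _),
    Finset.sum_diag]
  ring

private lemma aux_trace_sq (G : Matrix (Fin N) (Fin N) ℂ) (hG : G.IsHermitian) :
    (Matrix.trace (G * G)).re
      = ∑ p ∈ (univ ×ˢ univ : Finset (Fin N × Fin N)), ‖G p.1 p.2‖ ^ 2 := by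
  rw [Finset.sum_product, Matrix.trace, Complex.re_sum]
  refine Finset.sum_congr rfl fun i _ => ?_
  rw [Matrix.diag, Matrix.mul_apply, Complex.re_sum]
  refine Finset.sum_congr rfl fun j _ => ?_
  have : G j i = starRingEnd ℂ (G i j) := (hG.apply j i).symm
  rw [this, Complex.mul_conj]
  simp [Complex.normSq_eq_norm_sq, ← Complex.ofReal_pow]

end Aux

/- ### The Fourier matrix (a complex Hadamard matrix) -/

noncomputable def zet (N : ℕ) : ℂ := Complex.exp (2 * Real.pi * Complex.I / N)

noncomputable def Fmat (N : ℕ) : Matrix (Fin N) (Fin N) ℂ :=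
  fun j k => zet N ^ (j.val * k.val) * ((Real.sqrt N : ℂ))⁻¹

private lemma zet_norm_one (N : ℕ) : ‖zet N‖ = 1 := by
  have h : (2 * (Real.pi:ℂ) * Complex.I / N) = ((2 * Real.pi / N : ℝ) : ℂ) * Complex.I := by
    push_cast; ring
  rw [zet, h, Complex.norm_exp_ofReal_mul_I]

private lemma zet_norm (N : ℕ) (n : ℕ) : ‖zet N ^ n‖ = 1 := by
  rw [norm_pow, zet_norm_one, one_pow]

private lemma Fmat_norm_sq (N : ℕ) (hN : 0 < N) (j k : Fin N) : ‖Fmat N j k‖ ^ 2 = 1 / N := by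
  rw [Fmat, norm_mul, zet_norm, one_mul, norm_inv, Complex.norm_real, Real.norm_eq_abs,
    inv_pow, _root_.sq_abs, Real.sq_sqrt (by positivity)]
  simp

private lemma zet_conj (N : ℕ) : star (zet N) = (zet N)⁻¹ := by
  rw [zet, Complex.star_def, ← Complex.exp_conj, ← Complex.exp_neg]
  congr 1
  simp [map_div₀, Complex.conj_I, map_ofNat]
  ring

private lemma zet_ne_zero (N : ℕ) : zet N ≠ 0 := Complex.exp_ne_zero _

lemma Fmat_unitary (N : ℕ) (hN : 0 < N) : Fmat N ∈ Matrix.unitaryGroup (Fin N) ℂ := by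
  have hprim : IsPrimitiveRoot (zet N) N := Complex.isPrimitiveRoot_exp N hN.ne'
  rw [Matrix.mem_unitaryGroup_iff]
  ext j k
  rw [Matrix.mul_apply, Matrix.one_apply]
  have hz := zet_ne_zero N
  have hss : ((Real.sqrt N:ℂ))⁻¹ * ((Real.sqrt N:ℂ))⁻¹ = ((N:ℂ))⁻¹ := by
    rw [← mul_inv, ← Complex.ofReal_mul, Real.mul_self_sqrt (by positivity)]
    push_cast
    ring
  have key : ∀ m : Fin N, Fmat N j m * (star (Fmat N)) m k
      = (zet N ^ ((j : ℤ) - (k : ℤ))) ^ (m : ℕ) * ((N : ℂ))⁻¹ := by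
    intro m
    have hzz : zet N ^ (j.val*m.val) * star (zet N ^ (k.val*m.val))
        = (zet N ^ ((j:ℤ)-(k:ℤ)))^(m:ℕ) := by
      rw [star_pow, zet_conj, ← zpow_natCast (zet N) (j.val*m.val),
        ← zpow_natCast ((zet N)⁻¹) (k.val*m.val), _root_.inv_zpow, ← _root_.zpow_neg,
        ← zpow_add₀ hz, ← zpow_natCast (zet N ^ ((j:ℤ)-(k:ℤ))) m.val, ← _root_.zpow_mul]
      congr 1
      push_cast
      ring
    have hstar : star ((Real.sqrt N : ℂ))⁻¹ = ((Real.sqrt N : ℂ))⁻¹ := by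
      simp [star_inv₀]
    simp only [Matrix.star_eq_conjTranspose, Matrix.conjTranspose_apply, Fmat, star_mul', hstar]
    calc zet N ^ (j.val*m.val) * ((Real.sqrt N:ℂ))⁻¹
          * (star (zet N ^ (k.val*m.val)) * ((Real.sqrt N:ℂ))⁻¹)
        = (zet N ^ (j.val*m.val) * star (zet N ^ (k.val*m.val)))
          * (((Real.sqrt N:ℂ))⁻¹ * ((Real.sqrt N:ℂ))⁻¹) := by ring
      _ = _ := by rw [hzz, hss]
  rw [Finset.sum_congr rfl (fun m _ => key m), ← Finset.sum_mul]
  by_cases hjk : j = k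
  · subst hjk
    simp only [sub_self, zpow_zero, one_pow, Finset.sum_const, card_univ, Fintype.card_fin,
      nsmul_eq_mul, mul_one, if_pos rfl]
    exact mul_inv_cancel₀ (Nat.cast_ne_zero.mpr hN.ne')
  · rw [if_neg hjk]
    have hj := j.isLt
    have hk := k.isLt
    have hw1 : zet N ^ ((j : ℤ) - (k : ℤ)) ≠ 1 := by
      rw [Ne, hprim.zpow_eq_one_iff_dvd]
      intro hdvd
      have h0 : ((j:ℤ) - (k:ℤ)) = 0 :=
        Int.eq_zero_of_dvd_of_natAbs_lt_natAbs hdvd (by omega)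
      exact hjk (Fin.ext (by omega))
    have hwN : (zet N ^ ((j : ℤ) - (k : ℤ))) ^ N = 1 := by
      rw [← zpow_natCast, ← _root_.zpow_mul, mul_comm, _root_.zpow_mul, zpow_natCast,
        hprim.pow_eq_one, _root_.one_zpow]
    rw [Fin.sum_univ_eq_sum_range (fun m => (zet N ^ ((j:ℤ)-(k:ℤ)))^m),
      geom_sum_eq hw1, hwN, sub_self, zero_div, zero_mul]

private lemma Fmat_diag_entry (N : ℕ) (hN : 0 < N) (d : Fin N → ℂ) (i : Fin N) :
    (Fmat N * Matrix.diagonal d * (Fmat N)ᴴ) i i = (∑ m, d m) / N := by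
  rw [Matrix.mul_apply]
  simp only [Matrix.mul_diagonal, Matrix.conjTranspose_apply]
  have step : ∀ m : Fin N, Fmat N i m * d m * star (Fmat N i m) = d m * (1 / N : ℂ) := by
    intro m
    have hnz : Fmat N i m * star (Fmat N i m) = ((‖Fmat N i m‖ ^ 2 : ℝ) : ℂ) := by
      rw [Complex.star_def, Complex.mul_conj, Complex.normSq_eq_norm_sq]
    calc Fmat N i m * d m * star (Fmat N i m)
        = d m * (Fmat N i m * star (Fmat N i m)) := by ring
      _ = d m * (1 / N : ℂ) := by
          rw [hnz, Fmat_norm_sq N hN]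
          push_cast
          try ring
  rw [Finset.sum_congr rfl (fun m _ => step m), ← Finset.sum_mul]
  ring

/-- For Hermitian `H`, the maximum over unitary `V` of the off-diagonal
squared Hilbert–Schmidt weight of `V * H * Vᴴ` equals `Tr(H²) − (Tr H)²/N`:
it is an upper bound for every unitary `V`, and it is attained by some unitary `V`. -/
theorem offdiag_weight_max_value (N : ℕ) (hN : 0 < N)
    (H : Matrix (Fin N) (Fin N) ℂ) (hH : H.IsHermitian) :
    (∀ V ∈ Matrix.unitaryGroup (Fin N) ℂ,
        ∑ p ∈ Finset.univ.offDiag, ‖(V * H * Vᴴ) p.1 p.2‖ ^ 2 ≤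
          (Matrix.trace (H * H)).re - (Matrix.trace H).re ^ 2 / N) ∧
    (∃ V ∈ Matrix.unitaryGroup (Fin N) ℂ,
        ∑ p ∈ Finset.univ.offDiag, ‖(V * H * Vᴴ) p.1 p.2‖ ^ 2 =
          (Matrix.trace (H * H)).re - (Matrix.trace H).re ^ 2 / N) := by
  have hNR : (0:ℝ) < (N:ℝ) := by exact_mod_cast hN
  constructor
  · -- Upper bound
    intro V hV
    have hG : (V * H * Vᴴ).IsHermitian := Matrix.isHermitian_mul_mul_conjTranspose V hH
    have htr2 : (Matrix.trace ((V * H * Vᴴ) * (V * H * Vᴴ))).re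
        = (Matrix.trace (H * H)).re := by
      rw [aux_conj_mul V H hV, aux_trace_conj V (H * H) hV]
    have htr1 : Matrix.trace (V * H * Vᴴ) = Matrix.trace H := aux_trace_conj V H hV
    rw [aux_split, ← aux_trace_sq _ hG, htr2]
    have hdiagre : ∀ i : Fin N, ‖(V * H * Vᴴ) i i‖ ^ 2 = ((V * H * Vᴴ) i i).re ^ 2 := by
      intro i
      have : (((V * H * Vᴴ) i i).re : ℂ) = (V * H * Vᴴ) i i := hG.coe_re_apply_self i
      conv_lhs => rw [← this]
      rw [Complex.norm_real, Real.norm_eq_abs, _root_.sq_abs]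
    have htrre : (Matrix.trace H).re = ∑ i, ((V * H * Vᴴ) i i).re := by
      rw [← htr1, Matrix.trace, Complex.re_sum]
      rfl
    have hCS : (Matrix.trace H).re ^ 2 / N ≤ ∑ i, ‖(V * H * Vᴴ) i i‖ ^ 2 := by
      rw [div_le_iff₀ hNR, htrre]
      have := sq_sum_le_card_mul_sum_sq (s := (univ : Finset (Fin N)))
        (f := fun i => ((V * H * Vᴴ) i i).re)
      simp only [card_univ, Fintype.card_fin] at this
      calc (∑ i, ((V * H * Vᴴ) i i).re) ^ 2
          ≤ (N:ℝ) * ∑ i, ((V * H * Vᴴ) i i).re ^ 2 := by exact_mod_cast this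
        _ = (∑ i, ‖(V * H * Vᴴ) i i‖ ^ 2) * N := by
            rw [Finset.sum_congr rfl fun i _ => hdiagre i]; ring
    linarith
  · -- Attainment
    set U0 : Matrix (Fin N) (Fin N) ℂ := (hH.eigenvectorUnitary : Matrix (Fin N) (Fin N) ℂ)
      with hU0def
    have hU : U0 ∈ Matrix.unitaryGroup (Fin N) ℂ := hH.eigenvectorUnitary.2
    set d : Fin N → ℂ := fun m => ((hH.eigenvalues m : ℝ) : ℂ) with hddef
    set D : Matrix (Fin N) (Fin N) ℂ := Matrix.diagonal d with hDdef
    have hspec : H = U0 * D * U0ᴴ := by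
      have := hH.spectral_theorem
      rw [← Matrix.star_eq_conjTranspose]
      exact this
    set V : Matrix (Fin N) (Fin N) ℂ := Fmat N * U0ᴴ with hVdef
    have hVstar : U0ᴴ ∈ Matrix.unitaryGroup (Fin N) ℂ := by
      rw [← Matrix.star_eq_conjTranspose]
      exact Unitary.star_mem hU
    have hV : V ∈ Matrix.unitaryGroup (Fin N) ℂ := mul_mem (Fmat_unitary N hN) hVstar
    refine ⟨V, hV, ?_⟩
    have hUU : U0ᴴ * U0 = 1 := by
      have := (Matrix.mem_unitaryGroup_iff').mp hU
      simpa [Matrix.star_eq_conjTranspose] using this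
    have hcancel : ∀ X : Matrix (Fin N) (Fin N) ℂ, U0ᴴ * (U0 * X) = X := by
      intro X
      rw [← Matrix.mul_assoc, hUU, Matrix.one_mul]
    have hGeq : V * H * Vᴴ = Fmat N * D * (Fmat N)ᴴ := by
      rw [hVdef, Matrix.conjTranspose_mul, Matrix.conjTranspose_conjTranspose]
      conv_lhs => rw [hspec]
      simp only [Matrix.mul_assoc]
      rw [hcancel, hcancel]
    have hG : (V * H * Vᴴ).IsHermitian := Matrix.isHermitian_mul_mul_conjTranspose V hH
    have htr2 : (Matrix.trace ((V * H * Vᴴ) * (V * H * Vᴴ))).re = (Matrix.trace (H * H)).re := by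
      rw [aux_conj_mul V H hV, aux_trace_conj V (H * H) hV]
    set t : ℝ := ∑ i, hH.eigenvalues i with htdef
    have htraceH : Matrix.trace H = (t : ℂ) := by
      rw [hspec, aux_trace_conj U0 D hU, hDdef, Matrix.trace_diagonal, htdef]
      push_cast
      rfl
    have hGdiag : ∀ i, (V * H * Vᴴ) i i = (t : ℂ) / N := by
      intro i
      rw [hGeq, hDdef, Fmat_diag_entry N hN d i]
      congr 1
      rw [htdef]
      push_cast
      rfl
    have hdiagsum : ∑ i, ‖(V * H * Vᴴ) i i‖ ^ 2 = t ^ 2 / N := by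
      have : ∀ i : Fin N, ‖(V * H * Vᴴ) i i‖ ^ 2 = (t / N) ^ 2 := by
        intro i
        rw [hGdiag i]
        rw [show ((t:ℂ)/N) = (((t/N : ℝ)) : ℂ) by push_cast; ring]
        rw [Complex.norm_real, Real.norm_eq_abs, _root_.sq_abs]
      rw [Finset.sum_congr rfl fun i _ => this i]
      rw [Finset.sum_const, card_univ, Fintype.card_fin, nsmul_eq_mul]
      field_simp
    have htrre : (Matrix.trace H).re = t := by rw [htraceH, Complex.ofReal_re]
    rw [aux_split, ← aux_trace_sq _ hG, htr2, hdiagsum, htrre]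
end

section
/- Let D be an N×N real diagonal matrix. Then the maximum over all unitary matrices V of order N of the minimum over all N×N permutation matrices P of the squared Hilbert–Schmidt norm ‖D − P V D V† Pᵀ‖²_HS equals 2·(Tr D² − (Tr D)²/N); moreover this maximum is attained when V is any complex Hadamard matrix of order N (in which case the value is independent of the permutation P). -/
open Matrix

/-- The real diagonal matrix with diagonal `d`, viewed as a complex matrix. -/
noncomputable def diagMat {N : ℕ} (d : Fin N → ℝ) : Matrix (Fin N) (Fin N) ℂ :=
  Matrix.diagonal fun i => (d i : ℂ)

/-- Squared Hilbert–Schmidt norm of a complex matrix. -/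
noncomputable def hsNormSq {N : ℕ} (X : Matrix (Fin N) (Fin N) ℂ) : ℝ :=
  ∑ i, ∑ j, ‖X i j‖ ^ 2

lemma star_mul_self_re (z : ℂ) : (star z * z).re = ‖z‖ ^ 2 := by
  rw [RCLike.star_def, RCLike.conj_mul]
  norm_cast

lemma mul_star_self (z : ℂ) : z * star z = ((‖z‖ ^ 2 : ℝ) : ℂ) := by
  rw [RCLike.star_def, RCLike.mul_conj]
  norm_cast

lemma hsNormSq_eq_re_trace {N : ℕ} (X : Matrix (Fin N) (Fin N) ℂ) :
    hsNormSq X = (Matrix.trace (Xᴴ * X)).re := by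
  simp only [hsNormSq, Matrix.trace, Matrix.diag_apply, Matrix.mul_apply,
    Matrix.conjTranspose_apply, Complex.re_sum]
  rw [Finset.sum_comm]
  exact Finset.sum_congr rfl fun i _ => Finset.sum_congr rfl fun j _ =>
    (star_mul_self_re _).symm

/-- Key formula for the HS distance from `D` to a unitary conjugate of `D`. -/
lemma key_formula {N : ℕ} (d : Fin N → ℝ) (W : Matrix (Fin N) (Fin N) ℂ)
    (hW : W ∈ Matrix.unitaryGroup (Fin N) ℂ) :
    hsNormSq (diagMat d - W * diagMat d * Wᴴ) =
      2 * (∑ i, d i ^ 2) - 2 * ∑ i, d i * ∑ k, d k * ‖W i k‖ ^ 2 := by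
  have hW1 : Wᴴ * W = 1 := by
    have := hW.1
    rwa [Matrix.star_eq_conjTranspose] at this
  set D := diagMat d with hD
  have hDH : Dᴴ = D := by
    simp [hD, diagMat, Matrix.diagonal_conjTranspose]
  set A := W * D * Wᴴ with hA
  have hAH : Aᴴ = A := by
    simp only [hA, Matrix.conjTranspose_mul, Matrix.conjTranspose_conjTranspose, hDH]
    rw [Matrix.mul_assoc]
  have hAii : ∀ i, A i i = ((∑ k, d k * ‖W i k‖ ^ 2 : ℝ) : ℂ) := by
    intro i
    have h1 : A i i = ∑ k, W i k * (d k : ℂ) * star (W i k) := by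
      rw [hA, hD, diagMat, Matrix.mul_apply]
      exact Finset.sum_congr rfl fun k _ => by
        rw [Matrix.mul_diagonal, Matrix.conjTranspose_apply]
    rw [h1]
    push_cast
    refine Finset.sum_congr rfl fun k _ => ?_
    rw [mul_right_comm, mul_star_self]
    push_cast
    ring
  -- trace of D*D
  have hDD : Matrix.trace (D * D) = ((∑ i, d i ^ 2 : ℝ) : ℂ) := by
    simp [hD, diagMat, Matrix.diagonal_mul_diagonal, Matrix.trace_diagonal, sq]
  -- trace of A*A
  have hAA : Matrix.trace (A * A) = ((∑ i, d i ^ 2 : ℝ) : ℂ) := by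
    have : A * A = W * (D * D) * Wᴴ := by
      rw [hA]
      calc W * D * Wᴴ * (W * D * Wᴴ) = W * D * (Wᴴ * W) * D * Wᴴ := by
            noncomm_ring
        _ = W * (D * D) * Wᴴ := by rw [hW1]; noncomm_ring
    rw [this, Matrix.trace_mul_cycle, ← Matrix.mul_assoc, hW1, Matrix.one_mul, hDD]
  -- trace of D*A
  have hDA : Matrix.trace (D * A) = ((∑ i, d i * ∑ k, d k * ‖W i k‖ ^ 2 : ℝ) : ℂ) := by
    have : Matrix.trace (D * A) = ∑ i, (d i : ℂ) * A i i := by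
      simp [Matrix.trace, Matrix.diag_apply, hD, diagMat, Matrix.diagonal_mul]
    rw [this]
    push_cast
    refine Finset.sum_congr rfl fun i _ => ?_
    rw [hAii i]
    push_cast
    ring
  have hAD : Matrix.trace (A * D) = Matrix.trace (D * A) := Matrix.trace_mul_comm A D
  have hexp : (D - A)ᴴ * (D - A) = D * D - D * A - A * D + A * A := by
    rw [Matrix.conjTranspose_sub, hDH, hAH]
    noncomm_ring
  rw [hsNormSq_eq_re_trace, hexp, Matrix.trace_add, Matrix.trace_sub, Matrix.trace_sub,
    hDD, hAA, hDA, hAD, hDA, ← Complex.ofReal_sub, ← Complex.ofReal_sub,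
    ← Complex.ofReal_add, Complex.ofReal_re]
  ring

/-- Averaging over permutations: some permutation does at least as well as the mean. -/
lemma exists_perm_good {N : ℕ} (hN : 0 < N) (a b : Fin N → ℝ) :
    ∃ σ : Equiv.Perm (Fin N),
      (∑ i, a i) * (∑ i, b i) / N ≤ ∑ i, a i * b (σ i) := by
  classical
  set S : Fin N → ℝ := fun i => ∑ σ : Equiv.Perm (Fin N), b (σ i) with hS
  have i₀ : Fin N := ⟨0, hN⟩
  have hSconst : ∀ i, S i = S i₀ := by
    intro i
    rw [hS]
    refine Fintype.sum_bijective (fun σ => σ * Equiv.swap i₀ i)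
      (Group.mulRight_bijective _) _ _ fun σ => ?_
    simp [Equiv.Perm.mul_apply, Equiv.swap_apply_left]
  have hNS : (N : ℝ) * S i₀ = (Nat.factorial N : ℝ) * ∑ i, b i := by
    have h1 : ∑ i, S i = ∑ σ : Equiv.Perm (Fin N), ∑ i, b (σ i) := by
      rw [hS, Finset.sum_comm]
    have h2 : ∀ σ : Equiv.Perm (Fin N), ∑ i, b (σ i) = ∑ i, b i := fun σ =>
      Equiv.sum_comp σ b
    have h3 : ∑ i, S i = (N : ℝ) * S i₀ := by
      rw [Finset.sum_congr rfl fun i _ => hSconst i]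
      simp [mul_comm]
    rw [← h3, h1, Finset.sum_congr rfl fun σ _ => h2 σ, Finset.sum_const,
      Finset.card_univ, Fintype.card_perm, Fintype.card_fin, nsmul_eq_mul]
  have htot : ∑ σ : Equiv.Perm (Fin N), ∑ i, a i * b (σ i) =
      (Nat.factorial N : ℝ) * ((∑ i, a i) * (∑ i, b i)) / N := by
    rw [Finset.sum_comm]
    have : ∀ i, ∑ σ : Equiv.Perm (Fin N), a i * b (σ i) = a i * S i₀ := by
      intro i
      rw [← Finset.mul_sum]
      show a i * S i = a i * S i₀
      rw [hSconst i]
    rw [Finset.sum_congr rfl fun i _ => this i, ← Finset.sum_mul]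
    have hNne : (N : ℝ) ≠ 0 := Nat.cast_ne_zero.mpr hN.ne'
    have hSi : S i₀ = (Nat.factorial N : ℝ) * (∑ i, b i) / N := by
      rw [eq_div_iff hNne]
      linarith [hNS]
    rw [hSi]
    ring
  have hnonempty : (Finset.univ : Finset (Equiv.Perm (Fin N))).Nonempty :=
    Finset.univ_nonempty
  obtain ⟨σ, _, hσ⟩ := Finset.exists_le_of_sum_le hnonempty (le_of_eq (by
    rw [Finset.sum_const, Finset.card_univ, Fintype.card_perm, Fintype.card_fin,
      nsmul_eq_mul, htot]
    ring) : ∑ _σ : Equiv.Perm (Fin N), (∑ i, a i) * (∑ i, b i) / N ≤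
      ∑ σ : Equiv.Perm (Fin N), ∑ i, a i * b (σ i))
  exact ⟨σ, hσ⟩

lemma perm_conj {N : ℕ} (d : Fin N → ℝ) (V : Matrix (Fin N) (Fin N) ℂ)
    (σ : Equiv.Perm (Fin N)) :
    (σ.permMatrix ℂ) * V * diagMat d * Vᴴ * (σ.permMatrix ℂ)ᵀ =
      ((σ.permMatrix ℂ) * V) * diagMat d * ((σ.permMatrix ℂ) * V)ᴴ := by
  have hPT : (σ.permMatrix ℂ)ᵀ = (σ.permMatrix ℂ)ᴴ := by
    ext i j
    simp only [Matrix.transpose_apply, Matrix.conjTranspose_apply,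
      Equiv.Perm.permMatrix, PEquiv.toMatrix_apply]
    split <;> simp
  rw [hPT, Matrix.conjTranspose_mul]
  noncomm_ring

lemma perm_unitary {N : ℕ} (σ : Equiv.Perm (Fin N)) (V : Matrix (Fin N) (Fin N) ℂ)
    (hV : V ∈ Matrix.unitaryGroup (Fin N) ℂ) :
    (σ.permMatrix ℂ) * V ∈ Matrix.unitaryGroup (Fin N) ℂ := by
  have hPH : (σ.permMatrix ℂ)ᴴ = ((σ⁻¹).permMatrix ℂ) := by
    have h1 : ((σ⁻¹).permMatrix ℂ) = (σ.permMatrix ℂ)ᵀ := by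
      show ((σ.symm).toPEquiv.toMatrix : Matrix (Fin N) (Fin N) ℂ) = _
      rw [Equiv.toPEquiv_symm, PEquiv.toMatrix_symm]
    rw [h1]
    ext i j
    simp only [Matrix.conjTranspose_apply, Matrix.transpose_apply,
      Equiv.Perm.permMatrix, PEquiv.toMatrix_apply, apply_ite star, star_one, star_zero]
  have hP : (σ.permMatrix ℂ) ∈ Matrix.unitaryGroup (Fin N) ℂ := by
    have key : ∀ τ π : Equiv.Perm (Fin N),
        (τ.permMatrix ℂ) * (π.permMatrix ℂ) = ((π * τ).permMatrix ℂ) := by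
      intro τ π
      show τ.toPEquiv.toMatrix * π.toPEquiv.toMatrix = (π * τ).toPEquiv.toMatrix
      rw [Equiv.Perm.mul_def, Equiv.toPEquiv_trans, PEquiv.toMatrix_trans]
    have hone : ((1 : Equiv.Perm (Fin N)).permMatrix ℂ) = 1 := by
      show (1 : Equiv.Perm (Fin N)).toPEquiv.toMatrix = 1
      rw [show (1 : Equiv.Perm (Fin N)).toPEquiv = (Equiv.refl (Fin N)).toPEquiv from rfl,
        Equiv.toPEquiv_refl]
      exact PEquiv.toMatrix_refl
    constructor <;> rw [Matrix.star_eq_conjTranspose, hPH, key] <;> simp [hone]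
  exact mul_mem hP hV

/-- For a real diagonal matrix `D`, the maximum over unitaries `V` of the
minimum over permutation matrices `P` of `‖D − P V D Vᴴ Pᵀ‖²_HS` equals
`2 (Tr D² − (Tr D)²/N)`, and it is attained when `V` is any complex Hadamard matrix,
the value then being independent of the permutation `P`. -/
theorem max_min_distance_to_orbit (N : ℕ) (hN : 0 < N) (d : Fin N → ℝ)
    (F : Matrix (Fin N) (Fin N) ℂ)
    (hF : F ∈ Matrix.unitaryGroup (Fin N) ℂ)
    (hFmod : ∀ j k, ‖F j k‖ = 1 / Real.sqrt N) :
    (∀ V ∈ Matrix.unitaryGroup (Fin N) ℂ, ∃ σ : Equiv.Perm (Fin N),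
        hsNormSq (diagMat d -
            (σ.permMatrix ℂ) * V * diagMat d * Vᴴ * (σ.permMatrix ℂ)ᵀ) ≤
          2 * (∑ i, d i ^ 2 - (∑ i, d i) ^ 2 / N)) ∧
    (∀ σ : Equiv.Perm (Fin N),
        hsNormSq (diagMat d -
            (σ.permMatrix ℂ) * F * diagMat d * Fᴴ * (σ.permMatrix ℂ)ᵀ) =
          2 * (∑ i, d i ^ 2 - (∑ i, d i) ^ 2 / N)) := by
  have hentry : ∀ (V : Matrix (Fin N) (Fin N) ℂ) (σ : Equiv.Perm (Fin N)) i k,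
      ((σ.permMatrix ℂ) * V) i k = V (σ i) k := by
    intro V σ i k
    rw [Equiv.Perm.permMatrix, PEquiv.toMatrix_toPEquiv_mul]
    rfl
  have hval : ∀ (V : Matrix (Fin N) (Fin N) ℂ), V ∈ Matrix.unitaryGroup (Fin N) ℂ →
      ∀ σ : Equiv.Perm (Fin N),
      hsNormSq (diagMat d - (σ.permMatrix ℂ) * V * diagMat d * Vᴴ * (σ.permMatrix ℂ)ᵀ) =
        2 * (∑ i, d i ^ 2) - 2 * ∑ i, d i * ∑ k, d k * ‖V (σ i) k‖ ^ 2 := by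
    intro V hV σ
    rw [perm_conj, key_formula d _ (perm_unitary σ V hV)]
    simp only [hentry]
  constructor
  · intro V hV
    set m : Fin N → ℝ := fun i => ∑ k, d k * ‖V i k‖ ^ 2 with hm
    have hsum_m : ∑ i, m i = ∑ i, d i := by
      have hcol : ∀ k, ∑ i, ‖V i k‖ ^ 2 = 1 := by
        intro k
        have h1 : (Vᴴ * V) k k = 1 := by
          have := hV.1
          rw [Matrix.star_eq_conjTranspose] at this
          rw [this, Matrix.one_apply_eq]
        have h2 : (Vᴴ * V) k k = ∑ i, star (V i k) * V i k := by
          simp [Matrix.mul_apply, Matrix.conjTranspose_apply]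
        have h3 : ((∑ i, ‖V i k‖ ^ 2 : ℝ) : ℂ) = 1 := by
          rw [← h1, h2]
          push_cast
          exact Finset.sum_congr rfl fun i _ => by
            rw [mul_comm, mul_star_self]; push_cast; ring
        exact_mod_cast h3
      rw [hm, Finset.sum_comm]
      simp only [← Finset.mul_sum]
      exact Finset.sum_congr rfl fun k _ => by rw [hcol k, mul_one]
    obtain ⟨σ, hσ⟩ := exists_perm_good hN d m
    refine ⟨σ, ?_⟩
    rw [hval V hV σ]
    have : ∑ i, d i * ∑ k, d k * ‖V (σ i) k‖ ^ 2 = ∑ i, d i * m (σ i) := rfl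
    rw [this]
    rw [hsum_m] at hσ
    have h4 : (∑ i, d i) ^ 2 / N ≤ ∑ i, d i * m (σ i) := by
      rw [sq]; exact hσ
    linarith
  · intro σ
    rw [hval F hF σ]
    have hmod2 : ∀ j k, ‖F j k‖ ^ 2 = 1 / N := by
      intro j k
      rw [hFmod j k, div_pow, one_pow, Real.sq_sqrt (Nat.cast_nonneg N)]
    have hrow : ∀ i, ∑ k, d k * ‖F (σ i) k‖ ^ 2 = (∑ k, d k) / N := by
      intro i
      simp only [hmod2]
      rw [← Finset.sum_mul, mul_one_div]
    simp only [hrow]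
    rw [← Finset.sum_mul]
    ring
end

section
/- (Horn's lemma) Let x and y be real vectors of length N with x ≺ y. Then there exists a real orthogonal N×N matrix W such that x_i = Σ_k (W_{ik})² y_k for every i; equivalently, x = O y for the orthostochastic matrix O with entries O_{ik} = (W_{ik})². -/
set_option maxHeartbeats 1600000

open Matrix Finset

/-- `Majorized x y` means `x ≺ y`: every partial sum of entries of `x` (over any set of
indices) is dominated by the sum of `y` over some set of indices of the same cardinality
(equivalently, sums of the `m` largest entries are ordered), and total sums agree. -/
def Majorized {N : ℕ} (x y : Fin N → ℝ) : Prop :=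
  (∀ s : Finset (Fin N), ∃ t : Finset (Fin N), t.card = s.card ∧
      ∑ i ∈ s, x i ≤ ∑ i ∈ t, y i) ∧
  ∑ i, x i = ∑ i, y i


lemma split_two {K : Type} [Fintype K] [DecidableEq K] (f : K → ℝ) (p q : K) (hpq : p ≠ q) :
    ∑ l, f l = f q + (f p + ∑ l ∈ (Finset.univ.erase q).erase p, f l) := by
  rw [Finset.add_sum_erase _ f (Finset.mem_erase.mpr ⟨hpq, Finset.mem_univ p⟩),
    Finset.add_sum_erase _ f (Finset.mem_univ q)]

lemma subtype_sum_eq {K : Type} [Fintype K] [DecidableEq K] (q : K) (G : K → ℝ) :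
    ∑ l' : {l : K // l ≠ q}, G l'.val = ∑ l ∈ Finset.univ.erase q, G l :=
  (Finset.sum_subtype _ (by simp) G).symm

lemma nat_le_orderEmb {m M : ℕ} (e : Fin m ↪o Fin M) : ∀ j : Fin m, (j : ℕ) ≤ (e j : ℕ) := by
  have key : ∀ k : ℕ, ∀ h : k < m, k ≤ (e ⟨k, h⟩ : ℕ) := by
    intro k
    induction k with
    | zero => intro h; exact Nat.zero_le _
    | succ k ih =>
      intro h
      have hk : k < m := Nat.lt_of_succ_lt h
      have h1 := ih hk
      have h2 : e ⟨k, hk⟩ < e ⟨k+1, h⟩ := e.strictMono (by simp [Fin.lt_def])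
      have := Fin.lt_def.mp h2
      omega
  intro j
  have := key j.val j.isLt
  simpa using this

lemma sum_le_sum_first {M m : ℕ} (Y : Fin M → ℝ) (hY : Antitone Y) (T : Finset (Fin M))
    (hT : T.card = m) (hmM : m ≤ M) :
    ∑ l ∈ T, Y l ≤ ∑ j : Fin m, Y (Fin.castLE hmM j) := by
  have h1 : ∑ l ∈ T, Y l = ∑ j : Fin m, Y (T.orderEmbOfFin hT j) := by
    refine Finset.sum_bij' (fun l hl => (T.orderIsoOfFin hT).symm ⟨l, hl⟩)
      (fun j _ => T.orderEmbOfFin hT j) ?_ ?_ ?_ ?_ ?_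
    · intro l hl; exact Finset.mem_univ _
    · intro j _; exact Finset.orderEmbOfFin_mem T hT j
    · intro l hl
      show (T.orderEmbOfFin hT) ((T.orderIsoOfFin hT).symm ⟨l, hl⟩) = l
      have : T.orderIsoOfFin hT ((T.orderIsoOfFin hT).symm ⟨l, hl⟩) = ⟨l, hl⟩ :=
        (T.orderIsoOfFin hT).apply_symm_apply _
      rw [← Finset.coe_orderIsoOfFin_apply, this]
    · intro j _
      show (T.orderIsoOfFin hT).symm ⟨T.orderEmbOfFin hT j, _⟩ = j
      simp_rw [← Finset.coe_orderIsoOfFin_apply]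
      exact (T.orderIsoOfFin hT).symm_apply_apply j
    · intro l hl
      show Y l = Y ((T.orderEmbOfFin hT) ((T.orderIsoOfFin hT).symm ⟨l, hl⟩))
      have : T.orderIsoOfFin hT ((T.orderIsoOfFin hT).symm ⟨l, hl⟩) = ⟨l, hl⟩ :=
        (T.orderIsoOfFin hT).apply_symm_apply _
      rw [← Finset.coe_orderIsoOfFin_apply, this]
  rw [h1]
  apply Finset.sum_le_sum
  intro j _
  apply hY
  rw [Fin.le_def]
  simpa using nat_le_orderEmb (T.orderEmbOfFin hT) j

lemma transfer_equiv {ι κ κ' : Type} [Fintype ι] [DecidableEq ι] [Fintype κ] [DecidableEq κ]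
    [Fintype κ'] [DecidableEq κ'] (f : κ' ≃ κ) (x : ι → ℝ) (y : κ → ℝ)
    (h : ∃ W : Matrix ι κ' ℝ, W * Wᵀ = 1 ∧ Wᵀ * W = 1 ∧ ∀ i, x i = ∑ k, W i k ^ 2 * y (f k)) :
    ∃ W : Matrix ι κ ℝ, W * Wᵀ = 1 ∧ Wᵀ * W = 1 ∧ ∀ i, x i = ∑ k, W i k ^ 2 * y k := by
  obtain ⟨W', h1, h2, h3⟩ := h
  refine ⟨fun i k => W' i (f.symm k), ?_, ?_, ?_⟩
  · ext i i'
    have e1 : (W' * W'ᵀ) i i' = (1 : Matrix ι ι ℝ) i i' := by rw [h1]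
    simp only [Matrix.mul_apply, Matrix.transpose_apply] at e1 ⊢
    rw [← Equiv.sum_comp f.symm (fun k' => W' i k' * W' i' k')] at e1
    exact e1
  · ext k k'
    have e1 : (W'ᵀ * W') (f.symm k) (f.symm k') = (1 : Matrix κ' κ' ℝ) (f.symm k) (f.symm k') := by
      rw [h2]
    simp only [Matrix.mul_apply, Matrix.transpose_apply, Matrix.one_apply] at e1 ⊢
    show ∑ j, W' j (f.symm k) * W' j (f.symm k') = _
    rw [e1]
    simp [Equiv.apply_eq_iff_eq]
  · intro i
    rw [h3 i, ← Equiv.sum_comp f.symm (fun k' => W' i k' ^ 2 * y (f k'))]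
    simp

lemma horn_const (n : ℕ) (ι : Type) [Fintype ι] [DecidableEq ι] (hι : Fintype.card ι = n + 1)
    (x : ι → ℝ) (Y : Fin (n+1) → ℝ) (hY : Antitone Y) (i₀ : ι) (hi₀ : ∀ i, x i ≤ x i₀)
    (hsumY : ∑ i, x i = ∑ j, Y j)
    (hYall : ∀ l, x i₀ ≤ Y l) :
    ∃ W : Matrix ι (Fin (n+1)) ℝ, W * Wᵀ = 1 ∧ Wᵀ * W = 1 ∧ ∀ i, x i = ∑ k, W i k ^ 2 * Y k := by
  set x₀ := x i₀ with hx₀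
  have hcards : (Fintype.card ι : ℝ) = (n+1 : ℝ) := by rw [hι]; push_cast; ring
  have hA : ∑ i, (x₀ - x i) = ((n+1 : ℝ)) * x₀ - ∑ i, x i := by
    rw [Finset.sum_sub_distrib, Finset.sum_const, Finset.card_univ, hι]
    push_cast; ring
  have hB : ∑ l, (Y l - x₀) = ∑ l, Y l - ((n+1 : ℝ)) * x₀ := by
    rw [Finset.sum_sub_distrib, Finset.sum_const, Finset.card_univ, Fintype.card_fin]
    push_cast; ring
  have hAnn : (0:ℝ) ≤ ∑ i, (x₀ - x i) := Finset.sum_nonneg (fun i _ => by linarith [hi₀ i])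
  have hBnn : (0:ℝ) ≤ ∑ l, (Y l - x₀) := Finset.sum_nonneg (fun l _ => by linarith [hYall l])
  have hA0 : ∑ i, (x₀ - x i) = 0 := by
    have : ∑ i, (x₀ - x i) + ∑ l, (Y l - x₀) = 0 := by rw [hA, hB]; linarith [hsumY]
    linarith
  have hB0 : ∑ l, (Y l - x₀) = 0 := by
    have : ∑ i, (x₀ - x i) + ∑ l, (Y l - x₀) = 0 := by rw [hA, hB]; linarith [hsumY]
    linarith
  have hxc : ∀ i, x i = x₀ := by
    intro i
    have := (Finset.sum_eq_zero_iff_of_nonneg (fun i _ => by linarith [hi₀ i] : ∀ i ∈ univ, (0:ℝ) ≤ x₀ - x i)).mp hA0 i (mem_univ i)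
    linarith
  have hYc : ∀ l, Y l = x₀ := by
    intro l
    have := (Finset.sum_eq_zero_iff_of_nonneg (fun l _ => by linarith [hYall l] : ∀ l ∈ univ, (0:ℝ) ≤ Y l - x₀)).mp hB0 l (mem_univ l)
    linarith
  set e : ι ≃ Fin (n+1) := Fintype.equivFinOfCardEq hι with he
  refine ⟨fun i l => if l = e i then 1 else 0, ?_, ?_, ?_⟩
  · ext i i'
    show ∑ l, (if l = e i then (1:ℝ) else 0) * (if l = e i' then (1:ℝ) else 0) = (1 : Matrix ι ι ℝ) i i'
    simp only [Matrix.mul_apply, Matrix.transpose_apply, Matrix.one_apply, ite_mul, one_mul,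
      zero_mul, Finset.sum_ite_eq, Finset.mem_univ, if_true]
    by_cases h : i = i'
    · simp [h]
    · simp [h, (e.injective.ne_iff).mpr h, Ne.symm ((e.injective.ne_iff).mpr h)]
  · ext l l'
    show ∑ i, (if l = e i then (1:ℝ) else 0) * (if l' = e i then (1:ℝ) else 0) = (1 : Matrix (Fin (n+1)) (Fin (n+1)) ℝ) l l'
    simp only [Matrix.mul_apply, Matrix.transpose_apply, Matrix.one_apply, ite_mul, one_mul,
      mul_ite, mul_one, mul_zero]
    rw [Finset.sum_eq_single (e.symm l)]
    · simp [eq_comm]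
    · intro i _ hne
      have : l ≠ e i := fun hh => hne (by rw [hh]; simp)
      simp [this]
    · intro h; exact absurd (mem_univ _) h
  · intro i
    rw [hxc i]
    have : ∀ l, (if l = e i then (1:ℝ) else 0) ^ 2 * Y l = if l = e i then Y l else 0 := by
      intro l; by_cases h : l = e i <;> simp [h]
    rw [Finset.sum_congr rfl (fun l _ => this l), Finset.sum_ite_eq', if_pos (mem_univ _), hYc]

lemma horn_main (n : ℕ) (ι : Type) [Fintype ι] [DecidableEq ι] (hι : Fintype.card ι = n + 1)
    (IH : ∀ (ι κ : Type) [Fintype ι] [DecidableEq ι] [Fintype κ] [DecidableEq κ],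
      Fintype.card ι = n → Fintype.card κ = n → ∀ (x : ι → ℝ) (y : κ → ℝ),
      (∀ s : Finset ι, ∃ t : Finset κ, t.card = s.card ∧ ∑ i ∈ s, x i ≤ ∑ k ∈ t, y k) →
      (∑ i, x i = ∑ k, y k) →
      ∃ W : Matrix ι κ ℝ, W * Wᵀ = 1 ∧ Wᵀ * W = 1 ∧ ∀ i, x i = ∑ k, W i k ^ 2 * y k)
    (x : ι → ℝ) (Y : Fin (n+1) → ℝ) (hY : Antitone Y) (i₀ : ι) (hi₀ : ∀ i, x i ≤ x i₀)
    (hmajY : ∀ s : Finset ι, ∃ t : Finset (Fin (n+1)), t.card = s.card ∧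
        ∑ i ∈ s, x i ≤ ∑ j ∈ t, Y j)
    (hsumY : ∑ i, x i = ∑ j, Y j)
    (hlast : ¬ x i₀ ≤ Y (Fin.last n)) :
    ∃ W : Matrix ι (Fin (n+1)) ℝ, W * Wᵀ = 1 ∧ Wᵀ * W = 1 ∧ ∀ i, x i = ∑ k, W i k ^ 2 * Y k := by
  set x₀ := x i₀ with hx₀
  set A : Finset (Fin (n+1)) := Finset.univ.filter (fun l => x₀ ≤ Y l) with hAdef
  have hA0 : (0 : Fin (n+1)) ∈ A := by
    obtain ⟨t, ht1, hts⟩ := hmajY {i₀}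
    rw [Finset.card_singleton] at ht1
    obtain ⟨j, rfl⟩ := Finset.card_eq_one.mp ht1
    rw [Finset.sum_singleton, Finset.sum_singleton] at hts
    exact Finset.mem_filter.mpr ⟨Finset.mem_univ _, le_trans hts (hY (Fin.zero_le j))⟩
  have hAne : A.Nonempty := ⟨0, hA0⟩
  set d : Fin (n+1) := A.max' hAne with hddef
  have hdA : d ∈ A := A.max'_mem hAne
  have hd : x₀ ≤ Y d := (Finset.mem_filter.mp hdA).2
  have hdn : (d : ℕ) < n := by
    have h1 : d.val < n + 1 := d.isLt
    have h2 : d.val ≠ n := by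
      intro h
      exact hlast (by rw [show Fin.last n = d from Fin.ext (by simp [Fin.val_last, h])]; exact hd)
    omega
  set q : Fin (n+1) := ⟨d.val + 1, by omega⟩ with hqdef
  set p : Fin (n+1) := d with hpdef
  have hpq : p ≠ q := by
    intro h
    have := congrArg Fin.val h
    simp [hqdef] at this
    rw [hpdef] at this; omega
  have hqA : q ∉ A := by
    intro h
    have := A.le_max' q h
    rw [Fin.le_def] at this
    simp [hqdef, ← hddef] at this
    rw [hpdef] at this; exact lt_irrefl _ this
  have hbx : Y q < x₀ := by
    by_contra h
    exact hqA (Finset.mem_filter.mpr ⟨Finset.mem_univ _, le_of_not_gt h⟩)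
  set a : ℝ := Y p with hadef
  set b : ℝ := Y q with hbdef
  have hab : b < a := lt_of_lt_of_le hbx hd
  set tv : ℝ := (x₀ - b) / (a - b) with htvdef
  have htv0 : 0 ≤ tv := div_nonneg (by linarith) (by linarith)
  have htv1 : tv ≤ 1 := (div_le_one (by linarith)).mpr (by linarith)
  set c : ℝ := Real.sqrt tv with hcdef
  set sc : ℝ := Real.sqrt (1 - tv) with hscdef
  have hc2 : c ^ 2 = tv := Real.sq_sqrt htv0
  have hs2 : sc ^ 2 = 1 - tv := Real.sq_sqrt (by linarith)
  have hcs : c ^ 2 + sc ^ 2 = 1 := by rw [hc2, hs2]; ring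
  have hmix : c ^ 2 * a + sc ^ 2 * b = x₀ := by
    rw [hc2, hs2]
    have h1 : tv * (a - b) = x₀ - b := div_mul_cancel₀ _ (by linarith : a - b ≠ 0)
    linear_combination h1
  set zz : Fin (n+1) → ℝ := fun l => if l = p then a + b - x₀ else Y l with hzzdef
  have hι' : Fintype.card {i : ι // i ≠ i₀} = n := by
    rw [Fintype.card_subtype]
    rw [Finset.filter_ne', Finset.card_erase_of_mem (Finset.mem_univ _), Finset.card_univ, hι]
    omega
  have hκ' : Fintype.card {l : Fin (n+1) // l ≠ q} = n := by
    rw [Fintype.card_subtype]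
    rw [Finset.filter_ne', Finset.card_erase_of_mem (Finset.mem_univ _), Finset.card_univ,
      Fintype.card_fin]
    omega
  -- tail majorization
  have hmaj' : ∀ s : Finset {i : ι // i ≠ i₀}, ∃ t : Finset {l : Fin (n+1) // l ≠ q},
      t.card = s.card ∧ ∑ i' ∈ s, x i'.val ≤ ∑ l' ∈ t, zz l'.val := by
    intro s
    have hmn : s.card ≤ n := by
      have h1 := Finset.card_le_univ s
      rwa [hι'] at h1
    have hsum_map : ∑ i ∈ s.map (Function.Embedding.subtype _), x i = ∑ i' ∈ s, x i'.val :=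
      Finset.sum_map _ _ _
    by_cases hcase : s.card ≤ (d : ℕ)
    · -- small case
      obtain ⟨T, hT, hTs⟩ := hmajY (s.map (Function.Embedding.subtype _))
      have hTm : T.card = s.card := by rw [hT, Finset.card_map]
      have htop := sum_le_sum_first Y hY T hTm (by omega : s.card ≤ n + 1)
      set Fm : Finset (Fin (n+1)) :=
        Finset.map (Fin.castLEEmb (by omega : s.card ≤ n + 1)) Finset.univ with hFmdef
      have hmem : ∀ l : Fin (n+1), l ∈ Fm ↔ (l : ℕ) < s.card := by
        intro l
        simp only [hFmdef, Finset.mem_map, Finset.mem_univ, true_and]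
        constructor
        · rintro ⟨j, rfl⟩; simpa using j.isLt
        · intro h; exact ⟨⟨l.val, h⟩, by simp [Fin.castLEEmb]⟩
      have hsub : ∀ l ∈ Fm, l ≠ q := by
        intro l hl h
        have h1 := (hmem l).mp hl
        rw [h] at h1
        simp [hqdef] at h1
        omega
      refine ⟨Fm.subtype (· ≠ q), ?_, ?_⟩
      · rw [Finset.card_subtype, Finset.filter_true_of_mem hsub, hFmdef, Finset.card_map,
          Finset.card_univ, Fintype.card_fin]
      · have h1 : ∑ l' ∈ Fm.subtype (· ≠ q), zz l'.val = ∑ l ∈ Fm, zz l := by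
          rw [Finset.sum_subtype_eq_sum_filter, Finset.filter_true_of_mem hsub]
        have h2 : ∑ l ∈ Fm, zz l = ∑ l ∈ Fm, Y l := by
          refine Finset.sum_congr rfl (fun l hl => ?_)
          have h3 := (hmem l).mp hl
          have : l ≠ p := by
            intro h
            rw [h] at h3
            omega
          simp [hzzdef, this]
        have h3 : ∑ l ∈ Fm, Y l = ∑ j : Fin s.card, Y (Fin.castLE (by omega) j) := by
          rw [hFmdef, Finset.sum_map]
          rfl
        rw [h1, h2, h3, ← hsum_map]
        exact le_trans hTs htop
    · -- large case
      push_neg at hcase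
      have hnotmem : i₀ ∉ s.map (Function.Embedding.subtype _) := by
        simp only [Finset.mem_map, Function.Embedding.coe_subtype]
        rintro ⟨i', _, h⟩
        exact i'.2 h
      obtain ⟨T, hT, hTs⟩ := hmajY (insert i₀ (s.map (Function.Embedding.subtype _)))
      have hTm : T.card = s.card + 1 := by
        rw [hT, Finset.card_insert_of_notMem hnotmem, Finset.card_map]
      have htop := sum_le_sum_first Y hY T hTm (by omega : s.card + 1 ≤ n + 1)
      set Fm : Finset (Fin (n+1)) :=
        Finset.map (Fin.castLEEmb (by omega : s.card + 1 ≤ n + 1)) Finset.univ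
        with hFmdef
      have hmem : ∀ l : Fin (n+1), l ∈ Fm ↔ (l : ℕ) < s.card + 1 := by
        intro l
        simp only [hFmdef, Finset.mem_map, Finset.mem_univ, true_and]
        constructor
        · rintro ⟨j, rfl⟩; simpa using j.isLt
        · intro h; exact ⟨⟨l.val, h⟩, by simp [Fin.castLEEmb]⟩
      have hqv : (q : ℕ) = (d : ℕ) + 1 := rfl
      have hqFm : q ∈ Fm := (hmem q).mpr (by omega)
      have hpFm : p ∈ Fm.erase q := Finset.mem_erase.mpr ⟨hpq, (hmem p).mpr (by omega)⟩
      refine ⟨Fm.subtype (· ≠ q), ?_, ?_⟩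
      · rw [Finset.card_subtype, Finset.filter_ne', Finset.card_erase_of_mem hqFm, hFmdef,
          Finset.card_map, Finset.card_univ, Fintype.card_fin]
        omega
      · have h1 : ∑ l' ∈ Fm.subtype (· ≠ q), zz l'.val = ∑ l ∈ Fm.erase q, zz l := by
          rw [Finset.sum_subtype_eq_sum_filter, Finset.filter_ne']
        have h2 : ∑ l ∈ Fm.erase q, zz l = (a + b - x₀) + ∑ l ∈ (Fm.erase q).erase p, Y l := by
          rw [← Finset.add_sum_erase _ zz hpFm]
          congr 1
          · simp [hzzdef]
          · refine Finset.sum_congr rfl (fun l hl => ?_)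
            have : l ≠ p := (Finset.mem_erase.mp hl).1
            simp [hzzdef, this]
        have h3 : ∑ l ∈ Fm, Y l = b + (a + ∑ l ∈ (Fm.erase q).erase p, Y l) := by
          rw [Finset.add_sum_erase _ Y hpFm, Finset.add_sum_erase _ Y hqFm]
        have h4 : ∑ l ∈ Fm, Y l = ∑ j : Fin (s.card + 1), Y (Fin.castLE (by omega) j) := by
          rw [hFmdef, Finset.sum_map]
          rfl
        have h5 : x₀ + ∑ i' ∈ s, x i'.val ≤ ∑ l ∈ T, Y l := by
          rw [← hsum_map, ← Finset.sum_insert hnotmem]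
          exact hTs
        have h6 : ∑ l ∈ T, Y l ≤ ∑ l ∈ Fm, Y l := by rw [h4]; exact htop
        rw [h1, h2]
        linarith
  have hpE : p ∈ (Finset.univ.erase q).erase p → False := fun h => (Finset.mem_erase.mp h).1 rfl
  have hsum' : ∑ i' : {i : ι // i ≠ i₀}, x i'.val = ∑ l' : {l : Fin (n+1) // l ≠ q}, zz l'.val := by
    have e1 := subtype_sum_eq i₀ x
    have e2 := subtype_sum_eq q zz
    have e3 : ∑ i, x i = x₀ + ∑ i ∈ Finset.univ.erase i₀, x i :=
      (Finset.add_sum_erase _ x (Finset.mem_univ i₀)).symm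
    have e4 : ∑ l, Y l = b + (a + ∑ l ∈ (Finset.univ.erase q).erase p, Y l) :=
      split_two Y p q hpq
    have e5 : ∑ l ∈ Finset.univ.erase q, zz l
        = (a + b - x₀) + ∑ l ∈ (Finset.univ.erase q).erase p, Y l := by
      rw [← Finset.add_sum_erase _ zz (Finset.mem_erase.mpr ⟨hpq, Finset.mem_univ p⟩)]
      congr 1
      · simp [hzzdef]
      · exact Finset.sum_congr rfl fun l hl => by simp [hzzdef, (Finset.mem_erase.mp hl).1]
    rw [e1, e2, e5]
    linarith [hsumY]
  obtain ⟨W', hW1, hW2, hW3⟩ := IH {i : ι // i ≠ i₀} {l : Fin (n+1) // l ≠ q} hι' hκ'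
    (fun i' => x i'.val) (fun l' => zz l'.val) hmaj' hsum'
  have hrow : ∀ i' i'' : {i : ι // i ≠ i₀},
      ∑ l' : {l : Fin (n+1) // l ≠ q}, W' i' l' * W' i'' l' = if i' = i'' then 1 else 0 := by
    intro i' i''
    have h7 := congrFun (congrFun hW1 i') i''
    simpa [Matrix.mul_apply, Matrix.transpose_apply, Matrix.one_apply] using h7
  have hcol : ∀ l' l'' : {l : Fin (n+1) // l ≠ q},
      ∑ i' : {i : ι // i ≠ i₀}, W' i' l' * W' i' l'' = if l' = l'' then 1 else 0 := by
    intro l' l''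
    have h7 := congrFun (congrFun hW2 l') l''
    simpa [Matrix.mul_apply, Matrix.transpose_apply, Matrix.one_apply] using h7
  have hkey : ∀ H : {l : Fin (n+1) // l ≠ q} → ℝ,
      ∑ l' : {l : Fin (n+1) // l ≠ q}, H l' = H ⟨p, hpq⟩ +
        ∑ l ∈ (Finset.univ.erase q).erase p, (if h : l = q then 0 else H ⟨l, h⟩) := by
    intro H
    set G : Fin (n+1) → ℝ := fun l => if h : l = q then 0 else H ⟨l, h⟩ with hGdef
    have e1 : ∑ l' : {l : Fin (n+1) // l ≠ q}, H l' = ∑ l' : {l : Fin (n+1) // l ≠ q}, G l'.val :=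
      Finset.sum_congr rfl fun l' _ => by rw [hGdef]; simp [dif_neg l'.2]
    rw [e1, subtype_sum_eq q G,
      ← Finset.add_sum_erase _ G (Finset.mem_erase.mpr ⟨hpq, Finset.mem_univ p⟩)]
    congr 1
    rw [hGdef]
    simp [dif_neg hpq]
  have hkeyι : ∀ H : {i : ι // i ≠ i₀} → ℝ,
      ∑ i' : {i : ι // i ≠ i₀}, H i' = ∑ i ∈ Finset.univ.erase i₀,
        (if h : i = i₀ then 0 else H ⟨i, h⟩) := by
    intro H
    set G : ι → ℝ := fun i => if h : i = i₀ then 0 else H ⟨i, h⟩ with hGdef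
    have e1 : ∑ i' : {i : ι // i ≠ i₀}, H i' = ∑ i' : {i : ι // i ≠ i₀}, G i'.val :=
      Finset.sum_congr rfl fun i' _ => by rw [hGdef]; simp [dif_neg i'.2]
    rw [e1, subtype_sum_eq i₀ G]
  set W : Matrix ι (Fin (n+1)) ℝ := fun i l =>
    if hi : i = i₀ then (if l = p then c else if l = q then sc else 0)
    else if hl : l = q then c * W' ⟨i, hi⟩ ⟨p, hpq⟩
      else if l = p then -sc * W' ⟨i, hi⟩ ⟨p, hpq⟩
      else W' ⟨i, hi⟩ ⟨l, hl⟩ with hWdef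
  have hWi0 : ∀ l, W i₀ l = if l = p then c else if l = q then sc else 0 := by
    intro l; rw [hWdef]; simp
  have hW_q : ∀ i (hi : i ≠ i₀), W i q = c * W' ⟨i, hi⟩ ⟨p, hpq⟩ := by
    intro i hi; rw [hWdef]; simp [dif_neg hi]
  have hW_p : ∀ i (hi : i ≠ i₀), W i p = -sc * W' ⟨i, hi⟩ ⟨p, hpq⟩ := by
    intro i hi; rw [hWdef]; simp [dif_neg hi, dif_neg hpq, hpq]
  have hW_o : ∀ i (hi : i ≠ i₀) l (hlq : l ≠ q) (hlp : l ≠ p), W i l = W' ⟨i, hi⟩ ⟨l, hlq⟩ := by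
    intro i hi l hlq hlp; rw [hWdef]; simp [dif_neg hi, dif_neg hlq, hlp]
  have hW0q : W i₀ q = sc := by rw [hWi0]; simp [Ne.symm hpq]
  have hW0p : W i₀ p = c := by rw [hWi0]; simp
  have hW0o : ∀ l, l ≠ q → l ≠ p → W i₀ l = 0 := by
    intro l h1 h2; rw [hWi0]; simp [h1, h2]
  refine ⟨W, ?_, ?_, ?_⟩
  · -- W * Wᵀ = 1
    ext i i''
    rw [Matrix.mul_apply]
    simp only [Matrix.transpose_apply, Matrix.one_apply]
    rw [split_two (fun l => W i l * W i'' l) p q hpq]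
    by_cases hi : i = i₀ <;> by_cases hi'' : i'' = i₀
    · rw [hi, hi'']
      have hz : ∑ l ∈ (Finset.univ.erase q).erase p, W i₀ l * W i₀ l = 0 :=
        Finset.sum_eq_zero fun l hl => by
          rw [hW0o l (Finset.mem_erase.mp (Finset.mem_erase.mp hl).2).1
            (Finset.mem_erase.mp hl).1]; ring
      rw [hz, hW0p, hW0q, if_pos rfl]
      linarith [hcs]
    · rw [hi]
      have hz : ∑ l ∈ (Finset.univ.erase q).erase p, W i₀ l * W i'' l = 0 :=
        Finset.sum_eq_zero fun l hl => by
          rw [hW0o l (Finset.mem_erase.mp (Finset.mem_erase.mp hl).2).1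
            (Finset.mem_erase.mp hl).1]; ring
      rw [hz, hW0p, hW0q, hW_q i'' hi'', hW_p i'' hi'',
        if_neg (show i₀ ≠ i'' from fun h => hi'' h.symm)]
      ring
    · rw [hi'']
      have hz : ∑ l ∈ (Finset.univ.erase q).erase p, W i l * W i₀ l = 0 :=
        Finset.sum_eq_zero fun l hl => by
          rw [hW0o l (Finset.mem_erase.mp (Finset.mem_erase.mp hl).2).1
            (Finset.mem_erase.mp hl).1]; ring
      rw [hz, hW0p, hW0q, hW_q i hi, hW_p i hi, if_neg hi]
      ring
    · have hE : ∑ l ∈ (Finset.univ.erase q).erase p, W i l * W i'' l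
          = ∑ l ∈ (Finset.univ.erase q).erase p,
            (if h : l = q then 0 else W' ⟨i, hi⟩ ⟨l, h⟩ * W' ⟨i'', hi''⟩ ⟨l, h⟩) := by
        refine Finset.sum_congr rfl fun l hl => ?_
        have h1 : l ≠ p := (Finset.mem_erase.mp hl).1
        have h2 : l ≠ q := (Finset.mem_erase.mp (Finset.mem_erase.mp hl).2).1
        rw [hW_o i hi l h2 h1, hW_o i'' hi'' l h2 h1, dif_neg h2]
      have h8 := hkey (fun l' => W' ⟨i, hi⟩ l' * W' ⟨i'', hi''⟩ l')
      rw [hrow ⟨i, hi⟩ ⟨i'', hi''⟩] at h8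
      rw [hE, hW_q i hi, hW_p i hi, hW_q i'' hi'', hW_p i'' hi'']
      have h9 : (if (⟨i, hi⟩ : {j : ι // j ≠ i₀}) = ⟨i'', hi''⟩ then (1:ℝ) else 0)
          = if i = i'' then 1 else 0 := by
        by_cases h : i = i'' <;> simp [h, Subtype.mk.injEq]
      rw [h9] at h8
      by_cases h : i = i''
      · rw [if_pos h] at h8 ⊢
        linear_combination (-1 : ℝ) * h8 +
          (W' ⟨i, hi⟩ ⟨p, hpq⟩ * W' ⟨i'', hi''⟩ ⟨p, hpq⟩) * hcs
      · rw [if_neg h] at h8 ⊢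
        linear_combination (-1 : ℝ) * h8 +
          (W' ⟨i, hi⟩ ⟨p, hpq⟩ * W' ⟨i'', hi''⟩ ⟨p, hpq⟩) * hcs
  · -- Wᵀ * W = 1
    ext l l''
    rw [Matrix.mul_apply]
    simp only [Matrix.transpose_apply, Matrix.one_apply]
    rw [← Finset.add_sum_erase _ (fun i => W i l * W i l'') (Finset.mem_univ i₀)]
    set coef : Fin (n+1) → ℝ := fun l => if l = q then c else if l = p then -sc else 1
      with hcoefdef
    set idx : Fin (n+1) → {l : Fin (n+1) // l ≠ q} := fun l =>
      if h : l = q then ⟨p, hpq⟩ else if l = p then ⟨p, hpq⟩ else ⟨l, h⟩ with hidxdef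
    have hcoefq : coef q = c := by rw [hcoefdef]; simp
    have hcoefp : coef p = -sc := by rw [hcoefdef]; simp [hpq]
    have hcoefo : ∀ l, l ≠ q → l ≠ p → coef l = 1 := by
      intro l h1 h2; rw [hcoefdef]; simp [h1, h2]
    have hidxq : idx q = ⟨p, hpq⟩ := by rw [hidxdef]; simp
    have hidxp : idx p = ⟨p, hpq⟩ := by rw [hidxdef]; simp [dif_neg hpq]
    have hidxo : ∀ l (h : l ≠ q), l ≠ p → idx l = ⟨l, h⟩ := by
      intro l h1 h2; rw [hidxdef]; simp [dif_neg h1, h2]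
    have hWcol : ∀ i (hi : i ≠ i₀) (l : Fin (n+1)), W i l = coef l * W' ⟨i, hi⟩ (idx l) := by
      intro i hi l
      by_cases h1 : l = q
      · rw [h1, hW_q i hi, hcoefq, hidxq]
      · by_cases h2 : l = p
        · rw [h2, hW_p i hi, hcoefp, hidxp]
        · rw [hW_o i hi l h1 h2, hcoefo l h1 h2, hidxo l h1 h2, one_mul]
    have hEsum : ∑ i ∈ Finset.univ.erase i₀, W i l * W i l''
        = coef l * coef l'' * (if idx l = idx l'' then 1 else 0) := by
      have e1 : ∑ i ∈ Finset.univ.erase i₀, W i l * W i l''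
          = ∑ i ∈ Finset.univ.erase i₀, (if h : i = i₀ then 0 else
              (coef l * coef l'') * (W' ⟨i, h⟩ (idx l) * W' ⟨i, h⟩ (idx l''))) := by
        refine Finset.sum_congr rfl fun i hi => ?_
        have h1 : i ≠ i₀ := (Finset.mem_erase.mp hi).1
        rw [hWcol i h1 l, hWcol i h1 l'', dif_neg h1]
        ring
      rw [e1, ← hkeyι (fun i' => (coef l * coef l'') * (W' i' (idx l) * W' i' (idx l''))),
        ← Finset.mul_sum, hcol (idx l) (idx l'')]
    rw [hEsum]
    have hmkne : ∀ (l₁ l₂ : Fin (n+1)) (h₁ : l₁ ≠ q) (h₂ : l₂ ≠ q), l₁ ≠ l₂ →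
        (⟨l₁, h₁⟩ : {j : Fin (n+1) // j ≠ q}) ≠ ⟨l₂, h₂⟩ :=
      fun l₁ l₂ h₁ h₂ hne h => hne (congrArg Subtype.val h)
    by_cases h1 : l = q
    · rw [h1, hW0q, hcoefq, hidxq]
      by_cases h2 : l'' = q
      · rw [h2, hW0q, hcoefq, hidxq, if_pos rfl, if_pos rfl]
        linarith [hcs]
      · by_cases h3 : l'' = p
        · rw [h3, hW0p, hcoefp, hidxp, if_pos rfl, if_neg (Ne.symm hpq)]
          ring
        · rw [hW0o l'' h2 h3, hcoefo l'' h2 h3, hidxo l'' h2 h3,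
            if_neg (hmkne p l'' hpq h2 (fun h => h3 h.symm)),
            if_neg (show q ≠ l'' from fun h => h2 h.symm)]
          ring
    · by_cases h3 : l = p
      · rw [h3, hW0p, hcoefp, hidxp]
        by_cases h2 : l'' = q
        · rw [h2, hW0q, hcoefq, hidxq, if_pos rfl, if_neg hpq]
          ring
        · by_cases h4 : l'' = p
          · rw [h4, hW0p, hcoefp, hidxp, if_pos rfl, if_pos rfl]
            linarith [hcs]
          · rw [hW0o l'' h2 h4, hcoefo l'' h2 h4, hidxo l'' h2 h4,
              if_neg (hmkne p l'' hpq h2 (fun h => h4 h.symm)),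
              if_neg (show p ≠ l'' from fun h => h4 h.symm)]
            ring
      · rw [hW0o l h1 h3, hcoefo l h1 h3, hidxo l h1 h3]
        by_cases h2 : l'' = q
        · rw [h2, hW0q, hcoefq, hidxq, if_neg (hmkne l p h1 hpq h3), if_neg h1]
          ring
        · by_cases h4 : l'' = p
          · rw [h4, hW0p, hcoefp, hidxp, if_neg (hmkne l p h1 hpq h3), if_neg h3]
            ring
          · rw [hW0o l'' h2 h4, hcoefo l'' h2 h4, hidxo l'' h2 h4]
            simp only [Subtype.mk.injEq]
            by_cases h5 : l = l'' <;> simp [h5]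
  · -- the x identity
    intro i
    by_cases hi : i = i₀
    · rw [hi]
      rw [split_two (fun l => W i₀ l ^ 2 * Y l) p q hpq]
      have hz : ∑ l ∈ (Finset.univ.erase q).erase p, W i₀ l ^ 2 * Y l = 0 :=
        Finset.sum_eq_zero fun l hl => by
          rw [hW0o l (Finset.mem_erase.mp (Finset.mem_erase.mp hl).2).1
            (Finset.mem_erase.mp hl).1]; ring
      rw [hz, hW0p, hW0q]
      show x₀ = sc ^ 2 * b + (c ^ 2 * a + 0)
      linarith [hmix]
    · rw [split_two (fun l => W i l ^ 2 * Y l) p q hpq]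
      have hE : ∑ l ∈ (Finset.univ.erase q).erase p, W i l ^ 2 * Y l
          = ∑ l ∈ (Finset.univ.erase q).erase p,
            (if h : l = q then 0 else W' ⟨i, hi⟩ ⟨l, h⟩ ^ 2 * zz l) := by
        refine Finset.sum_congr rfl fun l hl => ?_
        have h1 : l ≠ p := (Finset.mem_erase.mp hl).1
        have h2 : l ≠ q := (Finset.mem_erase.mp (Finset.mem_erase.mp hl).2).1
        rw [hW_o i hi l h2 h1, dif_neg h2, hzzdef]
        simp [h1]
      have h8 := hkey (fun l' => W' ⟨i, hi⟩ l' ^ 2 * zz l'.val)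
      rw [← hW3 ⟨i, hi⟩] at h8
      have hzzp : zz p = a + b - x₀ := by rw [hzzdef]; simp
      have h8' : x i = W' ⟨i, hi⟩ ⟨p, hpq⟩ ^ 2 * zz p +
          ∑ l ∈ (Finset.univ.erase q).erase p,
            (if h : l = q then 0 else W' ⟨i, hi⟩ ⟨l, h⟩ ^ 2 * zz l) := h8
      rw [hzzp] at h8'
      rw [hE, hW_q i hi, hW_p i hi]
      linear_combination h8' + (W' ⟨i, hi⟩ ⟨p, hpq⟩ ^ 2) * hmix +
        (-(W' ⟨i, hi⟩ ⟨p, hpq⟩ ^ 2 * (a + b))) * hcs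

theorem horn_aux : ∀ (n : ℕ) (ι κ : Type) [Fintype ι] [DecidableEq ι] [Fintype κ] [DecidableEq κ],
    Fintype.card ι = n → Fintype.card κ = n → ∀ (x : ι → ℝ) (y : κ → ℝ),
    (∀ s : Finset ι, ∃ t : Finset κ, t.card = s.card ∧ ∑ i ∈ s, x i ≤ ∑ k ∈ t, y k) →
    (∑ i, x i = ∑ k, y k) →
    ∃ W : Matrix ι κ ℝ, W * Wᵀ = 1 ∧ Wᵀ * W = 1 ∧ ∀ i, x i = ∑ k, W i k ^ 2 * y k := by
  intro n
  induction n with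
  | zero =>
    intro ι κ _ _ _ _ hι hκ x y hmaj hsum
    have hι' : IsEmpty ι := Fintype.card_eq_zero_iff.mp hι
    have hκ' : IsEmpty κ := Fintype.card_eq_zero_iff.mp hκ
    refine ⟨fun i => (hι'.false i).elim, ?_, ?_, fun i => (hι'.false i).elim⟩
    · ext i; exact (hι'.false i).elim
    · ext k; exact (hκ'.false k).elim
  | succ n IH =>
    intro ι κ _ _ _ _ hι hκ x y hmaj hsum
    -- transport y to a sorted vector on Fin (n+1)
    set g : Fin (n+1) ≃ κ := (Fintype.equivFinOfCardEq hκ).symm with hg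
    set σ : Equiv.Perm (Fin (n+1)) := Tuple.sort (fun j => -(y (g j))) with hσ
    set f : Fin (n+1) ≃ κ := σ.trans g with hf
    set Y : Fin (n+1) → ℝ := fun j => y (f j) with hYdef
    have hY : Antitone Y := by
      intro j j' hle
      have h1 := Tuple.monotone_sort (fun j => -(y (g j))) hle
      simp only [Function.comp_apply] at h1
      have : -(Y j) ≤ -(Y j') := h1
      linarith
    apply transfer_equiv f x y
    have hmajY : ∀ s : Finset ι, ∃ t : Finset (Fin (n+1)), t.card = s.card ∧
        ∑ i ∈ s, x i ≤ ∑ j ∈ t, Y j := by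
      intro s
      obtain ⟨t, ht, hts⟩ := hmaj s
      refine ⟨t.map f.symm.toEmbedding, by simp [ht], ?_⟩
      have : ∑ j ∈ t.map f.symm.toEmbedding, Y j = ∑ k ∈ t, y k := by
        rw [Finset.sum_map]
        exact Finset.sum_congr rfl (fun k _ => by simp [hYdef])
      rw [this]; exact hts
    have hsumY : ∑ i, x i = ∑ j, Y j := by
      rw [hsum, ← Equiv.sum_comp f y]
    clear hmaj hsum
    -- maximum of x
    have hneι : Nonempty ι := Fintype.card_pos_iff.mp (by omega)
    obtain ⟨i₀, hi₀⟩ := Finite.exists_max x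
    set x₀ := x i₀ with hx₀
    by_cases hlast : x₀ ≤ Y (Fin.last n)
    · exact horn_const n ι hι x Y hY i₀ hi₀ hsumY
        (fun l => le_trans hlast (hY (Fin.le_last l)))
    · exact horn_main n ι hι IH x Y hY i₀ hi₀ hmajY hsumY hlast

/-- Horn's lemma: if `x ≺ y` then there is a real orthogonal matrix `W`
with `x i = ∑ k (W i k)² * y k`; i.e. `x = O y` for the orthostochastic matrix
`O i k = (W i k)²`. -/
theorem horn_lemma (N : ℕ) (x y : Fin N → ℝ) (h : Majorized x y) :
    ∃ W : Matrix (Fin N) (Fin N) ℝ,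
      W * Wᵀ = 1 ∧ Wᵀ * W = 1 ∧ ∀ i, x i = ∑ k, W i k ^ 2 * y k :=
  horn_aux N (Fin N) (Fin N) (Fintype.card_fin N) (Fintype.card_fin N) x y h.1 h.2
end

section
/- Fix an integer N ≥ 1. The average over the unimodular ensemble of the purity Tr ρ(φ)² equals (2N − 1)/N²; that is, (1/(2π)^{N²}) ∫_{[0,2π]^{N²}} Tr(ρ(φ)²) dφ = (2N − 1)/N². -/
open Matrix MeasureTheory Complex

/-- The unimodular matrix with phases `φ`: entries `exp(i φ_{jk})`. -/
noncomputable def uniMat (N : ℕ) (φ : Fin N × Fin N → ℝ) : Matrix (Fin N) (Fin N) ℂ :=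
  Matrix.of fun j k => Complex.exp (Complex.I * (φ (j, k) : ℂ))

/-- The random-phase density matrix `ρ(φ) = A(φ) A(φ)ᴴ / N²`. -/
noncomputable def uniRho (N : ℕ) (φ : Fin N × Fin N → ℝ) : Matrix (Fin N) (Fin N) ℂ :=
  ((N : ℂ) ^ 2)⁻¹ • (uniMat N φ * (uniMat N φ)ᴴ)


section AuxPurity

lemma oneD (c : ℤ) :
    ∫ x in Set.Icc (0:ℝ) (2*Real.pi), Complex.exp (Complex.I * c * x) =
      if c = 0 then ((2*Real.pi : ℝ) : ℂ) else 0 := by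
  rw [MeasureTheory.integral_Icc_eq_integral_Ioc,
    ← intervalIntegral.integral_of_le (by positivity)]
  by_cases h : c = 0
  · simp [h, mul_comm]
  · rw [if_neg h]
    have hc : (Complex.I * c) ≠ 0 :=
      mul_ne_zero Complex.I_ne_zero (Int.cast_ne_zero.mpr h)
    rw [integral_exp_mul_complex hc]
    have h1 : Complex.I * c * (2*Real.pi : ℝ) = (c : ℂ) * (2 * Real.pi * Complex.I) := by
      push_cast; ring
    rw [h1, Complex.exp_int_mul_two_pi_mul_I]
    simp

def expCoef (N : ℕ) (j k l m : Fin N) (p : Fin N × Fin N) : ℤ :=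
  (if p = (j,k) then 1 else 0) - (if p = (l,k) then 1 else 0)
  + (if p = (l,m) then 1 else 0) - (if p = (j,m) then 1 else 0)

lemma coef_zero_iff {N : ℕ} (j k l m : Fin N) :
    (∀ p, expCoef N j k l m p = 0) ↔ (j = l ∨ k = m) := by
  constructor
  · intro h
    by_contra hc
    push_neg at hc
    have h1 : ((j,k) : Fin N × Fin N) ≠ (l,k) := by simp [Prod.ext_iff, hc.1]
    have h2 : ((j,k) : Fin N × Fin N) ≠ (l,m) := by simp [Prod.ext_iff, hc.1]
    have h3 : ((j,k) : Fin N × Fin N) ≠ (j,m) := by simp [Prod.ext_iff, hc.2]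
    have := h (j, k)
    rw [expCoef, if_pos rfl, if_neg h1, if_neg h2, if_neg h3] at this
    norm_num at this
  · rintro (rfl | rfl) p <;> · simp only [expCoef]; ring

lemma sum_coef {N : ℕ} (j k l m : Fin N) (φ : Fin N × Fin N → ℝ) :
    ∑ p : Fin N × Fin N, Complex.I * (expCoef N j k l m p) * (φ p) =
      Complex.I * (φ (j,k) : ℂ) - Complex.I * (φ (l,k) : ℂ)
      + Complex.I * (φ (l,m) : ℂ) - Complex.I * (φ (j,m) : ℂ) := by
  have : ∀ p : Fin N × Fin N, Complex.I * (expCoef N j k l m p) * (φ p) =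
      (if p = (j,k) then Complex.I * (φ p : ℂ) else 0)
      - (if p = (l,k) then Complex.I * (φ p : ℂ) else 0)
      + (if p = (l,m) then Complex.I * (φ p : ℂ) else 0)
      - (if p = (j,m) then Complex.I * (φ p : ℂ) else 0) := by
    intro p
    simp only [expCoef]
    push_cast [apply_ite (Int.cast : ℤ → ℂ)]
    split_ifs <;> ring
  simp only [this, Finset.sum_sub_distrib, Finset.sum_add_distrib,
    Finset.sum_ite_eq' Finset.univ, Finset.mem_univ, if_pos]

lemma term_eq {N : ℕ} (j k l m : Fin N) (φ : Fin N × Fin N → ℝ) :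
    ∏ p : Fin N × Fin N, Complex.exp (Complex.I * (expCoef N j k l m p) * (φ p)) =
      Complex.exp (Complex.I * (φ (j,k) : ℂ)) *
        (starRingEnd ℂ) (Complex.exp (Complex.I * (φ (l,k) : ℂ))) *
      (Complex.exp (Complex.I * (φ (l,m) : ℂ)) *
        (starRingEnd ℂ) (Complex.exp (Complex.I * (φ (j,m) : ℂ)))) := by
  rw [← Complex.exp_sum, sum_coef, ← Complex.exp_conj, ← Complex.exp_conj]
  simp only [_root_.map_mul, Complex.conj_I, Complex.conj_ofReal]
  rw [← Complex.exp_add, ← Complex.exp_add, ← Complex.exp_add]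
  ring_nf

lemma prod_integral {ι : Type*} [Fintype ι] (f : ι → ℝ → ℂ) :
    ∫ φ in Set.univ.pi fun _ : ι => Set.Icc (0 : ℝ) (2 * Real.pi),
        ∏ p, f p (φ p) =
      ∏ p, ∫ x in Set.Icc (0:ℝ) (2*Real.pi), f p x := by
  rw [← MeasureTheory.integral_indicator
    (MeasurableSet.univ_pi fun _ => measurableSet_Icc)]
  have : (Set.univ.pi fun _ : ι => Set.Icc (0 : ℝ) (2 * Real.pi)).indicator
      (fun φ => ∏ p, f p (φ p)) =
      fun φ => ∏ p, (Set.Icc (0:ℝ) (2*Real.pi)).indicator (f p) (φ p) := by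
    funext φ
    by_cases hφ : φ ∈ Set.univ.pi fun _ : ι => Set.Icc (0 : ℝ) (2 * Real.pi)
    · rw [Set.indicator_of_mem hφ]
      exact (Finset.prod_congr rfl fun p _ =>
        (Set.indicator_of_mem (hφ p (Set.mem_univ p)) (f p)).symm)
    · rw [Set.indicator_of_notMem hφ]
      rw [Set.mem_pi] at hφ
      push_neg at hφ
      obtain ⟨p, -, hp⟩ := hφ
      exact (Finset.prod_eq_zero (Finset.mem_univ p)
        (Set.indicator_of_notMem hp (f p))).symm
  rw [this, MeasureTheory.integral_fintype_prod_volume_eq_prod (ι := ι)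
    (fun p => (Set.Icc (0:ℝ) (2*Real.pi)).indicator (f p))]
  exact Finset.prod_congr rfl fun p _ => by
    rw [MeasureTheory.integral_indicator measurableSet_Icc]

lemma term_integral {N : ℕ} (j k l m : Fin N) :
    ∫ φ in Set.univ.pi fun _ : Fin N × Fin N => Set.Icc (0 : ℝ) (2 * Real.pi),
        ∏ p : Fin N × Fin N, Complex.exp (Complex.I * (expCoef N j k l m p) * (φ p)) =
      if j = l ∨ k = m then ((2*Real.pi : ℝ) : ℂ) ^ (N ^ 2) else 0 := by
  rw [prod_integral (fun p x => Complex.exp (Complex.I * (expCoef N j k l m p) * (x:ℂ)))]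
  simp only [oneD]
  by_cases h : j = l ∨ k = m
  · rw [if_pos h]
    have hz := (coef_zero_iff j k l m).mpr h
    calc ∏ p : Fin N × Fin N, (if expCoef N j k l m p = 0 then ((2*Real.pi:ℝ):ℂ) else 0)
        = ∏ _p : Fin N × Fin N, ((2*Real.pi:ℝ):ℂ) :=
          Finset.prod_congr rfl fun p _ => by rw [if_pos (hz p)]
      _ = ((2*Real.pi : ℝ) : ℂ) ^ (N ^ 2) := by
          rw [Finset.prod_const]
          simp [sq]
  · rw [if_neg h]
    have hex : ∃ p, expCoef N j k l m p ≠ 0 := by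
      by_contra hc
      push_neg at hc
      exact h ((coef_zero_iff j k l m).mp hc)
    obtain ⟨p, hp⟩ := hex
    exact Finset.prod_eq_zero (Finset.mem_univ p) (if_neg hp)

lemma trace_formula (N : ℕ) (φ : Fin N × Fin N → ℝ) :
    Matrix.trace (uniRho N φ ^ 2)
      = (((N:ℂ)^2)⁻¹)^2 * ∑ q : (Fin N × Fin N) × (Fin N × Fin N),
          ∏ p : Fin N × Fin N,
            Complex.exp (Complex.I * (expCoef N q.1.1 q.2.1 q.1.2 q.2.2 p) * (φ p)) := by
  simp only [uniRho, smul_pow, Matrix.trace_smul, smul_eq_mul]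
  congr 1
  rw [sq]
  simp only [Fintype.sum_prod_type, term_eq]
  simp only [Matrix.trace, Matrix.diag, Matrix.mul_apply, Matrix.conjTranspose_apply,
    uniMat, Matrix.of_apply, Finset.sum_mul_sum]
  rw [Finset.sum_comm]
  refine Finset.sum_congr rfl fun j _ => Finset.sum_congr rfl fun k _ => ?_
  rw [Finset.sum_comm]
  refine Finset.sum_congr rfl fun x _ => Finset.sum_congr rfl fun y _ => ?_
  simp only [RCLike.star_def]
  ring

lemma count_lemma (N : ℕ) (C : ℂ) :
    ∑ q : (Fin N × Fin N) × (Fin N × Fin N),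
        (if q.1.1 = q.1.2 ∨ q.2.1 = q.2.2 then C else 0)
      = (2 * (N:ℂ)^3 - (N:ℂ)^2) * C := by
  simp only [Fintype.sum_prod_type]
  have inner : ∀ j l : Fin N, (∑ k : Fin N, ∑ m : Fin N,
      if j = l ∨ k = m then C else 0) = if j = l then (N:ℂ)^2 * C else (N:ℂ) * C := by
    intro j l
    by_cases h : j = l
    · simp only [h, true_or, if_true, Finset.sum_const, Finset.card_univ, Fintype.card_fin,
        nsmul_eq_mul]
      ring
    · simp only [h, false_or, if_neg]
      simp [Finset.sum_ite_eq, Finset.sum_const, Finset.card_univ]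
  simp only [inner]
  have h2 : ∀ j : Fin N, (∑ l : Fin N, if j = l then (N:ℂ)^2*C else (N:ℂ)*C)
      = (N:ℂ)*((N:ℂ)*C) + ((N:ℂ)^2*C - (N:ℂ)*C) := by
    intro j
    have he : ∀ l : Fin N, (if j = l then (N:ℂ)^2*C else (N:ℂ)*C)
        = (N:ℂ)*C + (if j = l then (N:ℂ)^2*C - (N:ℂ)*C else 0) := by
      intro l; by_cases h : j = l <;> simp [h]
    simp only [he, Finset.sum_add_distrib, Finset.sum_const, Finset.card_univ,
      Fintype.card_fin, nsmul_eq_mul, Finset.sum_ite_eq, Finset.mem_univ, if_pos]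
  simp only [h2, Finset.sum_const, Finset.card_univ, Fintype.card_fin, nsmul_eq_mul]
  ring

end AuxPurity

/-- the average purity `⟨Tr ρ²⟩` over the unimodular ensemble equals
`(2N − 1)/N²`. -/
theorem avg_purity_unimodular (N : ℕ) (hN : 1 ≤ N) :
    ((2 * Real.pi : ℂ) ^ (N ^ 2))⁻¹ *
        ∫ φ in Set.univ.pi fun _ : Fin N × Fin N => Set.Icc (0 : ℝ) (2 * Real.pi),
          Matrix.trace (uniRho N φ ^ 2) =
      (2 * N - 1) / (N : ℂ) ^ 2 := by
  simp only [trace_formula]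
  rw [MeasureTheory.integral_const_mul, MeasureTheory.integral_finset_sum _ (fun q _ => by
    exact (Continuous.locallyIntegrable (by fun_prop)).integrableOn_isCompact
      (isCompact_univ_pi fun _ => isCompact_Icc))]
  have : ∀ q : (Fin N × Fin N) × (Fin N × Fin N),
      (∫ φ in Set.univ.pi fun _ : Fin N × Fin N => Set.Icc (0 : ℝ) (2 * Real.pi),
        ∏ p : Fin N × Fin N,
          Complex.exp (Complex.I * (expCoef N q.1.1 q.2.1 q.1.2 q.2.2 p) * (φ p)))
      = if q.1.1 = q.1.2 ∨ q.2.1 = q.2.2 then ((2*Real.pi : ℝ) : ℂ) ^ (N ^ 2) else 0 :=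
    fun q => term_integral q.1.1 q.2.1 q.1.2 q.2.2
  rw [Finset.sum_congr rfl fun q _ => this q, count_lemma]
  have hπ : ((2*Real.pi : ℝ) : ℂ) ^ (N^2) ≠ 0 := by
    apply pow_ne_zero
    simp [Real.pi_ne_zero]
  have hN0 : (N:ℂ) ≠ 0 := Nat.cast_ne_zero.mpr (by omega)
  have hcast : ((2*Real.pi : ℝ) : ℂ) = (2 * Real.pi : ℂ) := by push_cast; ring
  rw [hcast] at hπ ⊢
  field_simp
end

section
/- Fix an integer N ≥ 1. The average over the unimodular ensemble of Tr ρ(φ)³ equals (5N² − 6N + 2)/N⁴; that is, (1/(2π)^{N²}) ∫_{[0,2π]^{N²}} Tr(ρ(φ)³) dφ = (5N² − 6N + 2)/N⁴. -/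
open Matrix MeasureTheory

/-! ### Auxiliary combinatorial machinery -/

/-- The exponent of the phase `φ v` in a monomial of the expansion of `Tr ρ³`. -/
def cnt6 {N : ℕ} (a b c k1 k2 k3 : Fin N) (v : Fin N × Fin N) : ℤ :=
  ((if v = (a, k1) then 1 else 0) + (if v = (b, k2) then 1 else 0) +
      (if v = (c, k3) then 1 else 0)) -
    ((if v = (b, k1) then 1 else 0) + (if v = (c, k2) then 1 else 0) +
      (if v = (a, k3) then 1 else 0))

lemma cnt6_zero_iff {N : ℕ} (a b c k1 k2 k3 : Fin N) :
    (∀ v, cnt6 a b c k1 k2 k3 v = 0) ↔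
      ((a = b ∧ b = c) ∨ (k1 = k2 ∧ k2 = k3) ∨ (a = c ∧ k1 = k2) ∨
        (b = c ∧ k1 = k3) ∨ (a = b ∧ k2 = k3)) := by
  constructor
  · intro h
    have h1 := h (a, k1); have h2 := h (b, k2); have h3 := h (c, k3)
    have h4 := h (b, k1); have h5 := h (c, k2); have h6 := h (a, k3)
    simp only [cnt6, Prod.mk.injEq] at h1 h2 h3 h4 h5 h6
    by_cases hab : a = b <;> by_cases hac : a = c <;> by_cases hbc : b = c <;>
      by_cases h12 : k1 = k2 <;> by_cases h13 : k1 = k3 <;> by_cases h23 : k2 = k3 <;>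
      simp_all
  · rintro (⟨h1, h2⟩ | ⟨h1, h2⟩ | ⟨h1, h2⟩ | ⟨h1, h2⟩ | ⟨h1, h2⟩) v <;>
      subst h1 <;> subst h2 <;> simp only [cnt6] <;> split_ifs <;> omega

/-- `0/1`-valued indicator of a proposition. -/
noncomputable def chi (p : Prop) [Decidable p] : ℂ := if p then 1 else 0

lemma chi_and (p q : Prop) [Decidable p] [Decidable q] : chi (p ∧ q) = chi p * chi q := by
  simp only [chi]; split_ifs <;> simp_all

open Finset in
lemma sum_chi_eq {N : ℕ} (y : Fin N) : (∑ x : Fin N, chi (y = x)) = 1 := by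
  simp [chi]

open Finset in
lemma sum_chi_ne {N : ℕ} (y : Fin N) : (∑ x : Fin N, chi (¬ y = x)) = (N : ℂ) - 1 := by
  have h : ∀ x : Fin N, chi (¬ y = x) = 1 - chi (y = x) := by
    intro x; simp only [chi]; split_ifs <;> simp_all
  simp only [h, Finset.sum_sub_distrib, sum_chi_eq, Finset.sum_const, card_univ,
    Fintype.card_fin, nsmul_eq_mul, mul_one]

lemma chi_partition {N : ℕ} (a b c k1 k2 k3 : Fin N) :
    chi ((a = b ∧ b = c) ∨ (k1 = k2 ∧ k2 = k3) ∨ (a = c ∧ k1 = k2) ∨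
        (b = c ∧ k1 = k3) ∨ (a = b ∧ k2 = k3)) =
      chi (a = b ∧ b = c) + chi (a = b ∧ ¬b = c ∧ k2 = k3) +
        chi (¬a = b ∧ a = c ∧ k1 = k2) + chi (¬a = b ∧ b = c ∧ k1 = k3) +
        chi (¬a = b ∧ ¬a = c ∧ ¬b = c ∧ k1 = k2 ∧ k2 = k3) := by
  simp only [chi]
  by_cases hab : a = b <;> by_cases hac : a = c <;> by_cases hbc : b = c <;>
    by_cases h12 : k1 = k2 <;> by_cases h13 : k1 = k3 <;> by_cases h23 : k2 = k3 <;>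
    simp_all

open Finset in
lemma sum_chi_eq_mul_eq {N : ℕ} (a b : Fin N) :
    (∑ c : Fin N, chi (a = c) * chi (b = c)) = chi (a = b) := by
  have h : ∀ c : Fin N, chi (a = c) * chi (b = c) = chi (a = b) * chi (a = c) := by
    intro c; simp only [chi]; split_ifs <;> simp_all
  rw [Finset.sum_congr rfl fun c _ => h c, ← Finset.mul_sum, sum_chi_eq, mul_one]

open Finset in
lemma sum_chi_ne_ne {N : ℕ} (a b : Fin N) :
    (∑ c : Fin N, chi (¬a = c) * chi (¬b = c)) = (N : ℂ) - 2 + chi (a = b) := by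
  have h : ∀ c : Fin N, chi (¬a = c) * chi (¬b = c) =
      1 - chi (a = c) - chi (b = c) + chi (a = c) * chi (b = c) := by
    intro c; simp only [chi]; split_ifs <;> simp_all <;> ring
  rw [Finset.sum_congr rfl fun c _ => h c]
  simp only [Finset.sum_add_distrib, Finset.sum_sub_distrib, sum_chi_eq, sum_chi_eq_mul_eq,
    Finset.sum_const, card_univ, Fintype.card_fin, nsmul_eq_mul, mul_one]
  ring

open Finset in
lemma T1 (N : ℕ) : (∑ a : Fin N, ∑ b : Fin N, ∑ c : Fin N, ∑ _k1 : Fin N, ∑ _k2 : Fin N,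
    ∑ _k3 : Fin N, chi (a = b ∧ b = c)) = (N : ℂ) ^ 4 := by
  simp only [Finset.sum_const, card_univ, Fintype.card_fin, nsmul_eq_mul, chi_and,
    ← Finset.mul_sum, ← Finset.sum_mul, sum_chi_eq, mul_one, one_mul]
  ring

open Finset in
lemma T2 (N : ℕ) : (∑ a : Fin N, ∑ b : Fin N, ∑ c : Fin N, ∑ _k1 : Fin N, ∑ k2 : Fin N,
    ∑ k3 : Fin N, chi (a = b ∧ ¬b = c ∧ k2 = k3)) = (N : ℂ) ^ 3 * ((N : ℂ) - 1) := by
  simp only [Finset.sum_const, card_univ, Fintype.card_fin, nsmul_eq_mul, chi_and,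
    ← Finset.mul_sum, ← Finset.sum_mul, sum_chi_eq, sum_chi_ne, mul_one, one_mul]
  ring

open Finset in
lemma T3 (N : ℕ) : (∑ a : Fin N, ∑ b : Fin N, ∑ c : Fin N, ∑ k1 : Fin N, ∑ k2 : Fin N,
    ∑ _k3 : Fin N, chi (¬a = b ∧ a = c ∧ k1 = k2)) = (N : ℂ) ^ 3 * ((N : ℂ) - 1) := by
  simp only [Finset.sum_const, card_univ, Fintype.card_fin, nsmul_eq_mul, chi_and,
    ← Finset.mul_sum, ← Finset.sum_mul, sum_chi_eq, sum_chi_ne, mul_one, one_mul]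
  ring

open Finset in
lemma T4 (N : ℕ) : (∑ a : Fin N, ∑ b : Fin N, ∑ c : Fin N, ∑ k1 : Fin N, ∑ _k2 : Fin N,
    ∑ k3 : Fin N, chi (¬a = b ∧ b = c ∧ k1 = k3)) = (N : ℂ) ^ 3 * ((N : ℂ) - 1) := by
  simp only [Finset.sum_const, card_univ, Fintype.card_fin, nsmul_eq_mul, chi_and,
    ← Finset.mul_sum, ← Finset.sum_mul, sum_chi_eq, sum_chi_ne, mul_one, one_mul]
  ring

open Finset in
lemma T5 (N : ℕ) : (∑ a : Fin N, ∑ b : Fin N, ∑ c : Fin N, ∑ k1 : Fin N, ∑ k2 : Fin N,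
    ∑ k3 : Fin N, chi (¬a = b ∧ ¬a = c ∧ ¬b = c ∧ k1 = k2 ∧ k2 = k3)) =
    (N : ℂ) ^ 2 * ((N : ℂ) - 1) * ((N : ℂ) - 2) := by
  simp only [chi_and, ← Finset.mul_sum, sum_chi_eq, mul_one]
  have hc : ∀ a b : Fin N, (∑ c : Fin N, chi (¬a = c) * ∑ _k1 : Fin N, chi (¬b = c)) =
      (N : ℂ) * ((N : ℂ) - 2 + chi (a = b)) := by
    intro a b
    simp only [Finset.sum_const, card_univ, Fintype.card_fin, nsmul_eq_mul]
    rw [Finset.sum_congr rfl (fun c _ => by ring :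
      ∀ c ∈ Finset.univ, chi (¬a = c) * ((N : ℂ) * chi (¬b = c)) =
        (N : ℂ) * (chi (¬a = c) * chi (¬b = c))), ← Finset.mul_sum, sum_chi_ne_ne]
  simp only [hc]
  have hp : ∀ a b : Fin N, chi (¬a = b) * ((N : ℂ) * ((N : ℂ) - 2 + chi (a = b))) =
      ((N : ℂ) * ((N : ℂ) - 2)) * chi (¬a = b) := by
    intro a b; simp only [chi]; split_ifs <;> simp_all <;> ring
  simp only [hp, ← Finset.mul_sum, sum_chi_ne, Finset.sum_const, card_univ, Fintype.card_fin,
    nsmul_eq_mul]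
  ring

lemma count_sum (N : ℕ) :
    (∑ a : Fin N, ∑ b : Fin N, ∑ c : Fin N, ∑ k1 : Fin N, ∑ k2 : Fin N, ∑ k3 : Fin N,
      chi ((a = b ∧ b = c) ∨ (k1 = k2 ∧ k2 = k3) ∨ (a = c ∧ k1 = k2) ∨
        (b = c ∧ k1 = k3) ∨ (a = b ∧ k2 = k3))) =
    5 * (N : ℂ) ^ 4 - 6 * (N : ℂ) ^ 3 + 2 * (N : ℂ) ^ 2 := by
  simp only [chi_partition, Finset.sum_add_distrib]
  rw [T1, T2, T3, T4, T5]; ring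

/-! ### Analytic lemmas -/

lemma integral_exp_box (m : ℤ) :
    (∫ x in Set.Icc (0 : ℝ) (2 * Real.pi), Complex.exp (Complex.I * (m : ℂ) * (x : ℂ))) =
      if m = 0 then ((2 * Real.pi : ℝ) : ℂ) else 0 := by
  rcases eq_or_ne m 0 with hm | hm
  · simp only [hm, Int.cast_zero, mul_zero, zero_mul, Complex.exp_zero, if_pos rfl]
    rw [setIntegral_const, measureReal_def, Real.volume_Icc]
    rw [ENNReal.toReal_ofReal (by linarith [Real.pi_pos])]
    simp
  · rw [if_neg hm]
    have h2 : (0 : ℝ) ≤ 2 * Real.pi := by linarith [Real.pi_pos]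
    rw [MeasureTheory.integral_Icc_eq_integral_Ioc,
      ← intervalIntegral.integral_of_le h2]
    have hc : Complex.I * (m : ℂ) ≠ 0 := by
      simp [Complex.I_ne_zero, Complex.ext_iff]
      exact_mod_cast hm
    rw [show (fun x : ℝ => Complex.exp (Complex.I * (m : ℂ) * (x : ℂ))) =
      fun x : ℝ => Complex.exp ((Complex.I * (m : ℂ)) * (x : ℂ)) from rfl]
    rw [integral_exp_mul_complex hc]
    have h3 : Complex.I * (m : ℂ) * ((2 * Real.pi : ℝ) : ℂ) =
        (m : ℂ) * (2 * (Real.pi : ℂ) * Complex.I) := by push_cast; ring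
    rw [h3, Complex.exp_int_mul_two_pi_mul_I]
    simp

open Finset in
lemma box_prod {ι : Type*} [Fintype ι] (g : ι → ℝ → ℂ) :
    (∫ x : ι → ℝ in Set.univ.pi fun _ : ι => Set.Icc (0 : ℝ) (2 * Real.pi),
      ∏ v : ι, g v (x v)) =
    ∏ v : ι, ∫ y in Set.Icc (0 : ℝ) (2 * Real.pi), g v y := by
  rw [← MeasureTheory.integral_indicator (MeasurableSet.univ_pi fun _ => measurableSet_Icc)]
  have h : (Set.univ.pi fun _ : ι => Set.Icc (0 : ℝ) (2 * Real.pi)).indicator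
      (fun x : ι → ℝ => ∏ v : ι, g v (x v)) =
      fun x : ι → ℝ => ∏ v : ι, (Set.Icc (0 : ℝ) (2 * Real.pi)).indicator (g v) (x v) := by
    funext x
    by_cases hx : x ∈ Set.univ.pi fun _ : ι => Set.Icc (0 : ℝ) (2 * Real.pi)
    · rw [Set.indicator_of_mem hx]
      exact Finset.prod_congr rfl fun v _ =>
        (Set.indicator_of_mem (hx v (Set.mem_univ v)) _).symm
    · rw [Set.indicator_of_notMem hx]
      rw [Set.mem_univ_pi] at hx; push_neg at hx
      obtain ⟨v, hv⟩ := hx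
      exact (Finset.prod_eq_zero (Finset.mem_univ v) (Set.indicator_of_notMem hv _)).symm
  rw [h, MeasureTheory.integral_fintype_prod_volume_eq_prod
    (fun v => (Set.Icc (0 : ℝ) (2 * Real.pi)).indicator (g v))]
  exact Finset.prod_congr rfl fun v _ => integral_indicator measurableSet_Icc

/-! ### Matrix expansion lemmas -/

open Finset in
lemma trace_cube {n : ℕ} (M : Matrix (Fin n) (Fin n) ℂ) :
    (M ^ 3).trace = ∑ a : Fin n, ∑ b : Fin n, ∑ c : Fin n, M a b * M b c * M c a := by
  rw [pow_succ, pow_two]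
  simp only [Matrix.trace, Matrix.diag_apply, Matrix.mul_apply, Finset.sum_mul, Finset.mul_sum]
  rw [Finset.sum_congr rfl fun a _ => Finset.sum_comm]

open Finset in
lemma sum_cnt {N : ℕ} (a b c k1 k2 k3 : Fin N) (φ : Fin N × Fin N → ℝ) :
    (∑ v : Fin N × Fin N, Complex.I * ((cnt6 a b c k1 k2 k3 v : ℤ) : ℂ) * (φ v : ℂ)) =
      Complex.I * (φ (a, k1) : ℂ) + Complex.I * (φ (b, k2) : ℂ) + Complex.I * (φ (c, k3) : ℂ) -
        Complex.I * (φ (b, k1) : ℂ) - Complex.I * (φ (c, k2) : ℂ) -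
        Complex.I * (φ (a, k3) : ℂ) := by
  have h : ∀ v : Fin N × Fin N, Complex.I * ((cnt6 a b c k1 k2 k3 v : ℤ) : ℂ) * (φ v : ℂ) =
      ((if v = (a, k1) then Complex.I * (φ v : ℂ) else 0) +
        (if v = (b, k2) then Complex.I * (φ v : ℂ) else 0) +
        (if v = (c, k3) then Complex.I * (φ v : ℂ) else 0)) -
      ((if v = (b, k1) then Complex.I * (φ v : ℂ) else 0) +
        (if v = (c, k2) then Complex.I * (φ v : ℂ) else 0) +
        (if v = (a, k3) then Complex.I * (φ v : ℂ) else 0)) := by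
    intro v; simp only [cnt6]; push_cast; split_ifs <;> ring
  rw [Finset.sum_congr rfl fun v _ => h v]
  simp only [Finset.sum_sub_distrib, Finset.sum_add_distrib, Finset.sum_ite_eq',
    Finset.mem_univ, if_pos]
  ring

open Finset in
lemma trace_expand (N : ℕ) (φ : Fin N × Fin N → ℝ) :
    Matrix.trace (uniRho N φ ^ 3) = (((N : ℂ) ^ 2)⁻¹) ^ 3 *
      ∑ a : Fin N, ∑ b : Fin N, ∑ c : Fin N, ∑ k3 : Fin N, ∑ k2 : Fin N, ∑ k1 : Fin N,
        ∏ v : Fin N × Fin N,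
          Complex.exp (Complex.I * ((cnt6 a b c k1 k2 k3 v : ℤ) : ℂ) * (φ v : ℂ)) := by
  have hconj : ∀ r : ℝ, (starRingEnd ℂ) (Complex.exp (Complex.I * (r : ℂ))) =
      Complex.exp (-(Complex.I * (r : ℂ))) := by
    intro r; rw [← Complex.exp_conj]; congr 1; simp
  rw [uniRho, smul_pow, Matrix.trace_smul, trace_cube, smul_eq_mul]
  congr 1
  refine Finset.sum_congr rfl fun a _ => Finset.sum_congr rfl fun b _ =>
    Finset.sum_congr rfl fun c _ => ?_
  simp only [uniMat, Matrix.mul_apply, Matrix.conjTranspose_apply, Matrix.of_apply,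
    RCLike.star_def, Finset.sum_mul, Finset.mul_sum]
  refine Finset.sum_congr rfl fun k3 _ => Finset.sum_congr rfl fun k2 _ =>
    Finset.sum_congr rfl fun k1 _ => ?_
  simp only [hconj, ← Complex.exp_add, ← Complex.exp_sum, sum_cnt]
  congr 1
  ring

open Finset in
lemma sum3_rev {M : Type*} [AddCommMonoid M] {n : ℕ} (f : Fin n → Fin n → Fin n → M) :
    (∑ x : Fin n, ∑ y : Fin n, ∑ z : Fin n, f x y z) =
      ∑ z : Fin n, ∑ y : Fin n, ∑ x : Fin n, f x y z :=
  calc (∑ x : Fin n, ∑ y : Fin n, ∑ z : Fin n, f x y z)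
      = ∑ y : Fin n, ∑ x : Fin n, ∑ z : Fin n, f x y z := Finset.sum_comm
    _ = ∑ y : Fin n, ∑ z : Fin n, ∑ x : Fin n, f x y z :=
        Finset.sum_congr rfl fun y _ => Finset.sum_comm
    _ = ∑ z : Fin n, ∑ y : Fin n, ∑ x : Fin n, f x y z := Finset.sum_comm

/-- the average `⟨Tr ρ³⟩` over the unimodular ensemble equals `(5N² − 6N + 2)/N⁴`. -/
theorem avg_third_moment_unimodular (N : ℕ) (hN : 1 ≤ N) :
    ((2 * Real.pi : ℂ) ^ (N ^ 2))⁻¹ *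
        ∫ φ in Set.univ.pi fun _ : Fin N × Fin N => Set.Icc (0 : ℝ) (2 * Real.pi),
          Matrix.trace (uniRho N φ ^ 3) =
      (5 * N ^ 2 - 6 * N + 2) / (N : ℂ) ^ 4 := by
  classical
  set box : Set (Fin N × Fin N → ℝ) :=
    Set.univ.pi fun _ : Fin N × Fin N => Set.Icc (0 : ℝ) (2 * Real.pi) with hbox
  -- atomic integrand and its integrability
  set P : Fin N → Fin N → Fin N → Fin N → Fin N → Fin N → (Fin N × Fin N → ℝ) → ℂ :=
    fun a b c k1 k2 k3 φ => ∏ v : Fin N × Fin N,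
      Complex.exp (Complex.I * ((cnt6 a b c k1 k2 k3 v : ℤ) : ℂ) * (φ v : ℂ)) with hP
  have hatom : ∀ a b c k1 k2 k3, Integrable (P a b c k1 k2 k3) (volume.restrict box) := by
    intro a b c k1 k2 k3
    have hcont : Continuous (P a b c k1 k2 k3) := by
      apply continuous_finset_prod
      intro v _
      exact Complex.continuous_exp.comp
        (continuous_const.mul (Complex.continuous_ofReal.comp (continuous_apply v)))
    exact hcont.continuousOn.integrableOn_compact
      (isCompact_univ_pi fun _ => isCompact_Icc)
  -- rewrite the integrand
  simp only [trace_expand N]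
  rw [MeasureTheory.integral_const_mul]
  -- swap the integral with the six finite sums
  have hswap : (∫ φ in box,
      ∑ a : Fin N, ∑ b : Fin N, ∑ c : Fin N, ∑ k3 : Fin N, ∑ k2 : Fin N, ∑ k1 : Fin N,
        P a b c k1 k2 k3 φ) =
      ∑ a : Fin N, ∑ b : Fin N, ∑ c : Fin N, ∑ k3 : Fin N, ∑ k2 : Fin N, ∑ k1 : Fin N,
        ∫ φ in box, P a b c k1 k2 k3 φ := by
    rw [MeasureTheory.integral_finset_sum _ fun a _ => integrable_finset_sum _ fun b _ =>
      integrable_finset_sum _ fun c _ => integrable_finset_sum _ fun k3 _ =>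
      integrable_finset_sum _ fun k2 _ => integrable_finset_sum _ fun k1 _ =>
      hatom a b c k1 k2 k3]
    refine Finset.sum_congr rfl fun a _ => ?_
    rw [MeasureTheory.integral_finset_sum _ fun b _ => integrable_finset_sum _ fun c _ =>
      integrable_finset_sum _ fun k3 _ => integrable_finset_sum _ fun k2 _ =>
      integrable_finset_sum _ fun k1 _ => hatom a b c k1 k2 k3]
    refine Finset.sum_congr rfl fun b _ => ?_
    rw [MeasureTheory.integral_finset_sum _ fun c _ => integrable_finset_sum _ fun k3 _ =>
      integrable_finset_sum _ fun k2 _ => integrable_finset_sum _ fun k1 _ =>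
      hatom a b c k1 k2 k3]
    refine Finset.sum_congr rfl fun c _ => ?_
    rw [MeasureTheory.integral_finset_sum _ fun k3 _ => integrable_finset_sum _ fun k2 _ =>
      integrable_finset_sum _ fun k1 _ => hatom a b c k1 k2 k3]
    refine Finset.sum_congr rfl fun k3 _ => ?_
    rw [MeasureTheory.integral_finset_sum _ fun k2 _ => integrable_finset_sum _ fun k1 _ =>
      hatom a b c k1 k2 k3]
    refine Finset.sum_congr rfl fun k2 _ => ?_
    rw [MeasureTheory.integral_finset_sum _ fun k1 _ => hatom a b c k1 k2 k3]
  rw [hswap]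
  -- evaluate each atomic integral
  have hval : ∀ a b c k1 k2 k3 : Fin N, (∫ φ in box, P a b c k1 k2 k3 φ) =
      ((2 * Real.pi : ℝ) : ℂ) ^ (N ^ 2) *
        chi ((a = b ∧ b = c) ∨ (k1 = k2 ∧ k2 = k3) ∨ (a = c ∧ k1 = k2) ∨
          (b = c ∧ k1 = k3) ∨ (a = b ∧ k2 = k3)) := by
    intro a b c k1 k2 k3
    rw [hP, hbox]
    rw [box_prod fun v y => Complex.exp (Complex.I * ((cnt6 a b c k1 k2 k3 v : ℤ) : ℂ) * (y : ℂ))]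
    rw [Finset.prod_congr rfl fun v _ => integral_exp_box (cnt6 a b c k1 k2 k3 v)]
    by_cases h : ∀ v, cnt6 a b c k1 k2 k3 v = 0
    · rw [Finset.prod_congr rfl fun v _ => if_pos (h v), Finset.prod_const]
      rw [show chi ((a = b ∧ b = c) ∨ (k1 = k2 ∧ k2 = k3) ∨ (a = c ∧ k1 = k2) ∨
          (b = c ∧ k1 = k3) ∨ (a = b ∧ k2 = k3)) = 1 from
        if_pos ((cnt6_zero_iff a b c k1 k2 k3).mp h), mul_one]
      congr 1
      simp [Finset.card_univ, sq]
    · push_neg at h; obtain ⟨v, hv⟩ := h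
      rw [show chi ((a = b ∧ b = c) ∨ (k1 = k2 ∧ k2 = k3) ∨ (a = c ∧ k1 = k2) ∨
          (b = c ∧ k1 = k3) ∨ (a = b ∧ k2 = k3)) = 0 from
        if_neg fun hD => hv ((cnt6_zero_iff a b c k1 k2 k3).mpr hD v), mul_zero]
      exact Finset.prod_eq_zero (Finset.mem_univ v)
        (if_neg hv : (if cnt6 a b c k1 k2 k3 v = 0 then ((2 * Real.pi : ℝ) : ℂ) else 0) = 0)
  simp only [hval]
  -- pull out the constant and reorder the inner sums
  simp only [← Finset.mul_sum]
  have hre : (∑ a : Fin N, ∑ b : Fin N, ∑ c : Fin N, ∑ k3 : Fin N, ∑ k2 : Fin N, ∑ k1 : Fin N,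
      chi ((a = b ∧ b = c) ∨ (k1 = k2 ∧ k2 = k3) ∨ (a = c ∧ k1 = k2) ∨
        (b = c ∧ k1 = k3) ∨ (a = b ∧ k2 = k3))) =
      ∑ a : Fin N, ∑ b : Fin N, ∑ c : Fin N, ∑ k1 : Fin N, ∑ k2 : Fin N, ∑ k3 : Fin N,
      chi ((a = b ∧ b = c) ∨ (k1 = k2 ∧ k2 = k3) ∨ (a = c ∧ k1 = k2) ∨
        (b = c ∧ k1 = k3) ∨ (a = b ∧ k2 = k3)) :=
    Finset.sum_congr rfl fun a _ => Finset.sum_congr rfl fun b _ =>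
      Finset.sum_congr rfl fun c _ => (sum3_rev _).symm
  rw [hre, count_sum N]
  -- final arithmetic
  have hNz : (N : ℂ) ≠ 0 := Nat.cast_ne_zero.mpr (by omega)
  have hcast : ((2 * Real.pi : ℝ) : ℂ) = (2 * Real.pi : ℂ) := by push_cast; ring
  rw [hcast]
  have hK : ((2 * Real.pi : ℂ)) ^ (N ^ 2) ≠ 0 :=
    pow_ne_zero _ (mul_ne_zero two_ne_zero (Complex.ofReal_ne_zero.mpr Real.pi_ne_zero))
  rw [show ((2 * Real.pi : ℂ) ^ (N ^ 2))⁻¹ *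
      ((((N : ℂ) ^ 2)⁻¹) ^ 3 * ((2 * Real.pi : ℂ) ^ (N ^ 2) *
        (5 * (N : ℂ) ^ 4 - 6 * (N : ℂ) ^ 3 + 2 * (N : ℂ) ^ 2))) =
      (((2 * Real.pi : ℂ) ^ (N ^ 2))⁻¹ * (2 * Real.pi : ℂ) ^ (N ^ 2)) *
        ((((N : ℂ) ^ 2)⁻¹) ^ 3 *
          (5 * (N : ℂ) ^ 4 - 6 * (N : ℂ) ^ 3 + 2 * (N : ℂ) ^ 2)) from by ring,
    inv_mul_cancel₀ hK, one_mul]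
  field_simp
end

section
/- Fix an integer N ≥ 1. The average over the unimodular ensemble of Tr ρ(φ)⁴ equals (14N³ − 28N² + 20N − 5)/N⁶; that is, (1/(2π)^{N²}) ∫_{[0,2π]^{N²}} Tr(ρ(φ)⁴) dφ = (14N³ − 28N² + 20N − 5)/N⁶. -/
open Matrix MeasureTheory

namespace AvgU4
variable {N : ℕ}

theorem ite_ite_mul (P Q : Prop) [Decidable P] [Decidable Q] :
    (if P then (if Q then (1:ℂ) else 0) else 0) = (if P then 1 else 0) * (if Q then 1 else 0) := by
  by_cases hP : P <;> by_cases hQ : Q <;> simp [hP, hQ]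


variable {N : ℕ}

def eT (a b c d k1 k2 k3 k4 : Fin N) : Fin N × Fin N → ℤ := fun p =>
  (if p = (a,k1) then 1 else 0) + (if p = (b,k2) then 1 else 0) +
  (if p = (c,k3) then 1 else 0) + (if p = (d,k4) then 1 else 0) -
  (if p = (b,k1) then 1 else 0) - (if p = (c,k2) then 1 else 0) -
  (if p = (d,k3) then 1 else 0) - (if p = (a,k4) then 1 else 0)

abbrev C (a b c d k1 k2 k3 k4 : Fin N) : Prop := ∀ p, eT a b c d k1 k2 k3 k4 p = 0

def dl (x y : Fin N) : ℂ := if x = y then 1 else 0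

def Fk (N : ℕ) (k1 k2 k3 k4 : Fin N) : ℂ :=
  N + (N^2-N)*(dl k1 k2 + dl k1 k3 + dl k1 k4 + dl k2 k3 + dl k2 k4 + dl k3 k4)
    + (N^3-2*N^2+N)*(dl k1 k2 * dl k3 k4 + dl k1 k4 * dl k2 k3)
    + (N^3-3*N^2+2*N)*(dl k1 k2 * dl k2 k3 + dl k2 k3 * dl k3 k4 + dl k3 k4 * dl k1 k4 + dl k1 k4 * dl k1 k2)
    + (N^4-6*N^3+10*N^2-5*N)*(dl k1 k2 * dl k2 k3 * dl k3 k4)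

theorem sum4_congr {f g : Fin N → Fin N → Fin N → Fin N → ℂ}
    (h : ∀ a b c d, f a b c d = g a b c d) :
    (∑ a : Fin N, ∑ b : Fin N, ∑ c : Fin N, ∑ d : Fin N, f a b c d)
      = ∑ a : Fin N, ∑ b : Fin N, ∑ c : Fin N, ∑ d : Fin N, g a b c d := by
  simp only [h]

theorem count_j (k1 k2 k3 k4 : Fin N) :
    (∑ a : Fin N, ∑ b : Fin N, ∑ c : Fin N, ∑ d : Fin N,
      if C a b c d k1 k2 k3 k4 then (1:ℂ) else 0) = Fk N k1 k2 k3 k4 := by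
  by_cases h12 : k1 = k2
  · subst h12
    by_cases h13 : k1 = k3
    · subst h13
      by_cases h14 : k1 = k4
      · -- leaf 1 : all equal
        subst h14
        have hiff : ∀ a b c d : Fin N, C a b c d k1 k1 k1 k1 ↔ True := by
          intro a b c d
          simp only [iff_true]
          intro p; simp only [eT]; ring
        rw [sum4_congr (fun a b c d => if_congr (hiff a b c d) rfl rfl)]
        simp [Fk, dl]
        ring
      · -- leaf 2 : k1=k2=k3 ≠ k4 ; J : d = a
        have hiff : ∀ a b c d : Fin N, C a b c d k1 k1 k1 k4 ↔ d = a := by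
          intro a b c d
          constructor
          · intro h
            have h1 := h (d, k4)
            simp only [eT, Prod.mk.injEq] at h1
            simp [h14, Ne.symm h14] at h1
            by_cases h' : d = a <;> simp [h'] at h1 ⊢
          · rintro rfl p; simp only [eT]; ring
        rw [sum4_congr (fun a b c d => if_congr (hiff a b c d) rfl rfl)]
        simp [Fk, dl, h14, ite_and]
        ring
    · by_cases h14 : k1 = k4
      · -- leaf 5 : k1=k2=k4 ≠ k3 ; J : c = d
        subst h14
        have hiff : ∀ a b c d : Fin N, C a b c d k1 k1 k3 k1 ↔ c = d := by
          intro a b c d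
          constructor
          · intro h
            have h1 := h (c, k3)
            simp only [eT, Prod.mk.injEq] at h1
            simp [h13, Ne.symm h13] at h1
            by_cases h' : c = d <;> simp [h'] at h1 ⊢
          · rintro rfl p; simp only [eT]; ring
        rw [sum4_congr (fun a b c d => if_congr (hiff a b c d) rfl rfl)]
        simp [Fk, dl, h13, Ne.symm h13, ite_and]
        ring
      · by_cases h34 : k3 = k4
        · -- leaf 6 : {12}{34} ; J : a = c
          subst h34
          have hiff : ∀ a b c d : Fin N, C a b c d k1 k1 k3 k3 ↔ a = c := by
            intro a b c d
            constructor
            · intro h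
              have h1 := h (a, k1)
              simp only [eT, Prod.mk.injEq] at h1
              simp [h13, Ne.symm h13] at h1
              by_cases hab : a = b <;> by_cases hac : a = c <;>
                simp [hab, hac] at h1 ⊢ <;>
                by_cases hbc : b = c <;> simp [hbc] at h1 ⊢
            · rintro rfl p; simp only [eT]; ring
          rw [sum4_congr (fun a b c d => if_congr (hiff a b c d) rfl rfl)]
          simp [Fk, dl, h13, Ne.symm h13, ite_and]
          ring
        · -- leaf 9 : {12} only ; J : c = d ∧ d = a
          have hiff : ∀ a b c d : Fin N, C a b c d k1 k1 k3 k4 ↔ (c = d ∧ d = a) := by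
            intro a b c d
            constructor
            · intro h
              have h1 := h (c, k3); have h2 := h (d, k4)
              simp only [eT, Prod.mk.injEq] at h1 h2
              simp [h13, h14, h34, Ne.symm h13, Ne.symm h14, Ne.symm h34] at h1 h2
              constructor
              · by_cases h' : c = d <;> simp [h'] at h1 ⊢
              · by_cases h' : d = a <;> simp [h'] at h2 ⊢
            · rintro ⟨rfl, rfl⟩ p; simp only [eT]; ring
          rw [sum4_congr (fun a b c d => if_congr (hiff a b c d) rfl rfl)]
          simp [Fk, dl, h13, h14, h34, Ne.symm h13, Ne.symm h14, Ne.symm h34, ite_and]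
          ring
  · by_cases h13 : k1 = k3
    · subst h13
      by_cases h24 : k2 = k4
      · -- leaf 7 : {13}{24} ; J : (a=b ∧ c=d) ∨ (a=d ∧ b=c)
        subst h24
        have hiff : ∀ a b c d : Fin N, C a b c d k1 k2 k1 k2 ↔
            ((a = b ∧ c = d) ∨ (a = d ∧ b = c)) := by
          intro a b c d
          constructor
          · intro h
            have h1 := h (a, k1); have h2 := h (c, k1)
            simp only [eT, Prod.mk.injEq] at h1 h2
            simp [h12, Ne.symm h12] at h1 h2
            by_cases hab : a = b <;> by_cases had : a = d <;> by_cases hcb : c = b <;>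
              by_cases hcd : c = d <;> by_cases hac : a = c <;>
              simp [hab, had, hcb, hcd, hac] at h1 h2 ⊢ <;>
              first
              | tauto
              | (by_cases hbd : b = d <;> simp [hbd] at h1 h2 ⊢ <;> tauto)
              | (by_cases hdb : d = b <;> simp [hdb] at h1 h2 ⊢ <;> tauto)
          · rintro (⟨rfl, rfl⟩ | ⟨rfl, rfl⟩) p <;> (simp only [eT]; ring)
        rw [sum4_congr (fun a b c d => if_congr (hiff a b c d) rfl rfl)]
        have split : ∀ a b c d : Fin N,
            (if ((a = b ∧ c = d) ∨ (a = d ∧ b = c)) then (1:ℂ) else 0)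
            = (if (a = b ∧ c = d) then (1:ℂ) else 0) + (if (a = d ∧ b = c) then (1:ℂ) else 0)
              - (if (a = b ∧ c = d ∧ a = d ∧ b = c) then (1:ℂ) else 0) := by
          intro a b c d
          by_cases p1 : a = b ∧ c = d <;> by_cases p2 : a = d ∧ b = c <;>
            simp [p1, p2] <;> tauto
        simp only [split, Finset.sum_add_distrib, Finset.sum_sub_distrib, ite_and]
        simp [Fk, dl, h12, Ne.symm h12]
        ring
      · by_cases h14 : k1 = k4
        · -- leaf 4 : k1=k3=k4 ≠ k2 ; J : b = c
          subst h14
          have hiff : ∀ a b c d : Fin N, C a b c d k1 k2 k1 k1 ↔ b = c := by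
            intro a b c d
            constructor
            · intro h
              have h1 := h (b, k2)
              simp only [eT, Prod.mk.injEq] at h1
              simp [h12, Ne.symm h12] at h1
              by_cases h' : b = c <;> simp [h'] at h1 ⊢
            · rintro rfl p; simp only [eT]; ring
          rw [sum4_congr (fun a b c d => if_congr (hiff a b c d) rfl rfl)]
          simp [Fk, dl, h12, Ne.symm h12, ite_and]
          ring
        · -- leaf 13 : {13} only ; J : b = c ∧ d = a
          have hiff : ∀ a b c d : Fin N, C a b c d k1 k2 k1 k4 ↔ (b = c ∧ d = a) := by
            intro a b c d
            constructor
            · intro h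
              have h1 := h (b, k2); have h2 := h (d, k4)
              simp only [eT, Prod.mk.injEq] at h1 h2
              simp [h12, h14, h24, Ne.symm h12, Ne.symm h14, Ne.symm h24] at h1 h2
              constructor
              · by_cases h' : b = c <;> simp [h'] at h1 ⊢
              · by_cases h' : d = a <;> simp [h'] at h2 ⊢
            · rintro ⟨rfl, rfl⟩ p; simp only [eT]; ring
          rw [sum4_congr (fun a b c d => if_congr (hiff a b c d) rfl rfl)]
          simp [Fk, dl, h12, h14, h24, Ne.symm h12, Ne.symm h14, Ne.symm h24, ite_and]
          ring
    · by_cases h23 : k2 = k3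
      · subst h23
        by_cases h14 : k1 = k4
        · -- leaf 8 : {14}{23} ; J : b = d
          subst h14
          have hiff : ∀ a b c d : Fin N, C a b c d k1 k2 k2 k1 ↔ b = d := by
            intro a b c d
            constructor
            · intro h
              have h1 := h (b, k2)
              simp only [eT, Prod.mk.injEq] at h1
              simp [h12, Ne.symm h12] at h1
              by_cases hbc : b = c <;> by_cases hbd : b = d <;>
                simp [hbc, hbd] at h1 ⊢ <;>
                by_cases hcd : c = d <;> simp [hcd] at h1 ⊢
            · rintro rfl p; simp only [eT]; ring
          rw [sum4_congr (fun a b c d => if_congr (hiff a b c d) rfl rfl)]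
          simp [Fk, dl, h12, Ne.symm h12, ite_and]
          ring
        · by_cases h24 : k2 = k4
          · -- leaf 3 : k2=k3=k4 ≠ k1 ; J : a = b
            subst h24
            have hiff : ∀ a b c d : Fin N, C a b c d k1 k2 k2 k2 ↔ a = b := by
              intro a b c d
              constructor
              · intro h
                have h1 := h (a, k1)
                simp only [eT, Prod.mk.injEq] at h1
                simp [h12, Ne.symm h12] at h1
                by_cases h' : a = b <;> simp [h'] at h1 ⊢
              · rintro rfl p; simp only [eT]; ring
            rw [sum4_congr (fun a b c d => if_congr (hiff a b c d) rfl rfl)]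
            simp [Fk, dl, h12, Ne.symm h12, ite_and]
            ring
          · -- leaf 12 : {23} only ; J : a = b ∧ d = a
            have hiff : ∀ a b c d : Fin N, C a b c d k1 k2 k2 k4 ↔ (a = b ∧ d = a) := by
              intro a b c d
              constructor
              · intro h
                have h1 := h (a, k1); have h2 := h (d, k4)
                simp only [eT, Prod.mk.injEq] at h1 h2
                simp [h12, h14, h24, Ne.symm h12, Ne.symm h14, Ne.symm h24] at h1 h2
                constructor
                · by_cases h' : a = b <;> simp [h'] at h1 ⊢
                · by_cases h' : d = a <;> simp [h'] at h2 ⊢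
              · rintro ⟨rfl, rfl⟩ p; simp only [eT]; ring
            rw [sum4_congr (fun a b c d => if_congr (hiff a b c d) rfl rfl)]
            simp [Fk, dl, h12, h14, h24, Ne.symm h12, Ne.symm h14, Ne.symm h24, ite_and]
            ring
      · by_cases h14 : k1 = k4
        · -- leaf 11 : {14} only ; J : b = c ∧ c = d
          subst h14
          have hiff : ∀ a b c d : Fin N, C a b c d k1 k2 k3 k1 ↔ (b = c ∧ c = d) := by
            intro a b c d
            constructor
            · intro h
              have h1 := h (b, k2); have h2 := h (c, k3)
              simp only [eT, Prod.mk.injEq] at h1 h2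
              simp [h12, h13, h23, Ne.symm h12, Ne.symm h13, Ne.symm h23] at h1 h2
              constructor
              · by_cases h' : b = c <;> simp [h'] at h1 ⊢
              · by_cases h' : c = d <;> simp [h'] at h2 ⊢
            · rintro ⟨rfl, rfl⟩ p; simp only [eT]; ring
          rw [sum4_congr (fun a b c d => if_congr (hiff a b c d) rfl rfl)]
          simp [Fk, dl, h12, h13, h23, Ne.symm h12, Ne.symm h13, Ne.symm h23, ite_and]
          ring
        · by_cases h24 : k2 = k4
          · -- leaf 14 : {24} only ; J : a = b ∧ c = d
            subst h24
            have hiff : ∀ a b c d : Fin N, C a b c d k1 k2 k3 k2 ↔ (a = b ∧ c = d) := by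
              intro a b c d
              constructor
              · intro h
                have h1 := h (a, k1); have h2 := h (c, k3)
                simp only [eT, Prod.mk.injEq] at h1 h2
                simp [h12, h13, h23, Ne.symm h12, Ne.symm h13, Ne.symm h23] at h1 h2
                constructor
                · by_cases h' : a = b <;> simp [h'] at h1 ⊢
                · by_cases h' : c = d <;> simp [h'] at h2 ⊢
              · rintro ⟨rfl, rfl⟩ p; simp only [eT]; ring
            rw [sum4_congr (fun a b c d => if_congr (hiff a b c d) rfl rfl)]
            simp [Fk, dl, h12, h13, h23, Ne.symm h12, Ne.symm h13, Ne.symm h23, ite_and]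
            ring
          · by_cases h34 : k3 = k4
            · -- leaf 10 : {34} only ; J : a = b ∧ b = c
              subst h34
              have hiff : ∀ a b c d : Fin N, C a b c d k1 k2 k3 k3 ↔ (a = b ∧ b = c) := by
                intro a b c d
                constructor
                · intro h
                  have h1 := h (a, k1); have h2 := h (b, k2)
                  simp only [eT, Prod.mk.injEq] at h1 h2
                  simp [h12, h13, h23, Ne.symm h12, Ne.symm h13, Ne.symm h23] at h1 h2
                  constructor
                  · by_cases h' : a = b <;> simp [h'] at h1 ⊢
                  · by_cases h' : b = c <;> simp [h'] at h2 ⊢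
                · rintro ⟨rfl, rfl⟩ p; simp only [eT]; ring
              rw [sum4_congr (fun a b c d => if_congr (hiff a b c d) rfl rfl)]
              simp [Fk, dl, h12, h13, h23, Ne.symm h12, Ne.symm h13, Ne.symm h23, ite_and]
              ring
            · -- leaf 15 : all distinct ; J : a = b ∧ b = c ∧ c = d
              have hiff : ∀ a b c d : Fin N, C a b c d k1 k2 k3 k4 ↔ (a = b ∧ b = c ∧ c = d) := by
                intro a b c d
                constructor
                · intro h
                  have h1 := h (a, k1); have h2 := h (b, k2); have h3 := h (c, k3)
                  simp only [eT, Prod.mk.injEq] at h1 h2 h3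
                  simp [h12, h13, h14, h23, h24, h34, Ne.symm h12, Ne.symm h13, Ne.symm h14, Ne.symm h23,
                    Ne.symm h24, Ne.symm h34] at h1 h2 h3
                  refine ⟨?_, ?_, ?_⟩
                  · by_cases h' : a = b <;> simp [h'] at h1 ⊢
                  · by_cases h' : b = c <;> simp [h'] at h2 ⊢
                  · by_cases h' : c = d <;> simp [h'] at h3 ⊢
                · rintro ⟨rfl, rfl, rfl⟩ p; simp only [eT]; ring
              rw [sum4_congr (fun a b c d => if_congr (hiff a b c d) rfl rfl)]
              simp [Fk, dl, h12, h13, h14, h23, h24, h34, ite_and]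

theorem sum_Fk (N : ℕ) : (∑ k1 : Fin N, ∑ k2 : Fin N, ∑ k3 : Fin N, ∑ k4 : Fin N, Fk N k1 k2 k3 k4)
    = 14*N^5 - 28*N^4 + 20*N^3 - 5*N^2 := by
  have h1 : (∑ x : Fin N, ∑ x_1 : Fin N, ∑ x_2 : Fin N, ∑ x_3 : Fin N,
      if x_1 = x_2 then if x = x_3 then (1:ℂ) else 0 else 0) = (N:ℂ)^2 := by
    simp only [ite_ite_mul]
    simp [Finset.sum_ite_eq, ← Finset.mul_sum, ← Finset.sum_mul]
    ring
  have h2 : (∑ x : Fin N, ∑ x_1 : Fin N, ∑ x_2 : Fin N,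
      if x = x_1 then if x = x_2 then (1:ℂ) else 0 else 0) = (N:ℂ) := by
    simp only [ite_ite_mul]
    simp [Finset.sum_ite_eq, ← Finset.mul_sum, ← Finset.sum_mul]
  simp only [Fk, dl, Finset.sum_add_distrib, ← Finset.mul_sum, ite_mul, mul_ite, one_mul, mul_one,
    zero_mul, mul_zero, Finset.sum_ite_eq, Finset.sum_ite_eq', Finset.mem_univ, if_true,
    Finset.sum_const, Finset.card_univ, Fintype.card_fin, nsmul_eq_mul]
  rw [h1, h2]
  push_cast
  ring

theorem integral_factor (n : ℤ) :
    ∫ x in Set.Icc (0:ℝ) (2*Real.pi), Complex.exp (Complex.I * n * x)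
      = if n = 0 then (2*Real.pi : ℂ) else 0 := by
  rw [integral_Icc_eq_integral_Ioc, ← intervalIntegral.integral_of_le (by positivity : (0:ℝ) ≤ 2*Real.pi)]
  rcases eq_or_ne n 0 with rfl | hn
  · simp
  · have hc : Complex.I * n ≠ 0 := by
      simp [Complex.I_ne_zero, hn]
    rw [if_neg hn]
    have := integral_exp_mul_complex hc (a := 0) (b := 2*Real.pi)
    simp only [mul_assoc] at this ⊢
    rw [this]
    have h1 : Complex.exp (Complex.I * (n * (2*Real.pi : ℝ))) = 1 := by
      push_cast
      rw [show Complex.I * (n * (2*Real.pi)) = n * (2*Real.pi*Complex.I) by ring]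
      exact Complex.exp_int_mul_two_pi_mul_I n
    push_cast at h1
    simp [h1]

theorem integral_prod_box {N : ℕ} (e : Fin N × Fin N → ℤ) :
    ∫ φ in Set.univ.pi (fun _ : Fin N × Fin N => Set.Icc (0:ℝ) (2*Real.pi)),
        (∏ p : Fin N × Fin N, Complex.exp (Complex.I * (e p) * (φ p : ℂ)))
    = if (∀ p, e p = 0) then ((2*Real.pi : ℂ))^(N^2) else 0 := by
  have hS : MeasurableSet (Set.univ.pi (fun _ : Fin N × Fin N => Set.Icc (0:ℝ) (2*Real.pi))) :=
    MeasurableSet.univ_pi (fun _ => measurableSet_Icc)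
  rw [← integral_indicator hS]
  have hind : (Set.univ.pi (fun _ : Fin N × Fin N => Set.Icc (0:ℝ) (2*Real.pi))).indicator
      (fun φ : Fin N × Fin N → ℝ => ∏ p : Fin N × Fin N, Complex.exp (Complex.I * (e p) * (φ p : ℂ)))
      = fun φ => ∏ p : Fin N × Fin N,
          (Set.Icc (0:ℝ) (2*Real.pi)).indicator (fun x => Complex.exp (Complex.I * (e p) * (x : ℂ))) (φ p) := by
    funext φ
    by_cases hφ : φ ∈ Set.univ.pi (fun _ : Fin N × Fin N => Set.Icc (0:ℝ) (2*Real.pi))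
    · rw [Set.indicator_of_mem hφ]
      refine Finset.prod_congr rfl fun p _ => ?_
      rw [Set.indicator_of_mem (hφ p (Set.mem_univ p))]
    · rw [Set.indicator_of_notMem hφ]
      rw [Set.mem_univ_pi] at hφ
      push_neg at hφ
      obtain ⟨p, hp⟩ := hφ
      exact (Finset.prod_eq_zero (Finset.mem_univ p)
        (by rw [Set.indicator_of_notMem hp])).symm
  rw [hind]
  rw [MeasureTheory.volume_pi]
  beta_reduce
  rw [MeasureTheory.integral_fintype_prod_eq_prod (ι := Fin N × Fin N)
    (fun p (x : ℝ) => (Set.Icc (0:ℝ) (2*Real.pi)).indicator (fun x => Complex.exp (Complex.I * (e p) * (x : ℂ))) x)]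
  have : ∀ p : Fin N × Fin N,
      (∫ x : ℝ, (Set.Icc (0:ℝ) (2*Real.pi)).indicator (fun x => Complex.exp (Complex.I * (e p) * (x : ℂ))) x)
      = if e p = 0 then (2*Real.pi : ℂ) else 0 := by
    intro p
    rw [integral_indicator measurableSet_Icc]
    exact integral_factor (e p)
  simp only [this]
  by_cases hall : ∀ p, e p = 0
  · simp only [hall, if_true]
    rw [Finset.prod_const, Finset.card_univ]
    simp [hall, pow_two]
  · rw [if_neg hall]
    push_neg at hall
    obtain ⟨p, hp⟩ := hall
    exact Finset.prod_eq_zero (Finset.mem_univ p) (by rw [if_neg hp])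

variable {N : ℕ}

noncomputable def gfac (j l k : Fin N) (φ : Fin N × Fin N → ℝ) : ℂ :=
  Complex.exp (Complex.I * (φ (j,k) : ℂ)) * star (Complex.exp (Complex.I * (φ (l,k) : ℂ)))

noncomputable def f8 (a b c d k1 k2 k3 k4 : Fin N) (φ : Fin N × Fin N → ℝ) : ℂ :=
  gfac a b k1 φ * (gfac b c k2 φ * (gfac c d k3 φ * gfac d a k4 φ))

theorem hM (φ : Fin N × Fin N → ℝ) (a b : Fin N) :
    (uniMat N φ * (uniMat N φ)ᴴ) a b = ∑ k : Fin N, gfac a b k φ := by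
  simp [Matrix.mul_apply, uniMat, Matrix.conjTranspose_apply, gfac]

theorem sum4_rev (H : Fin N → Fin N → Fin N → Fin N → ℂ) :
    (∑ k1 : Fin N, ∑ k2 : Fin N, ∑ k3 : Fin N, ∑ k4 : Fin N, H k1 k2 k3 k4)
      = ∑ k1 : Fin N, ∑ k2 : Fin N, ∑ k3 : Fin N, ∑ k4 : Fin N, H k4 k3 k2 k1 := by
  have l : ∀ (G : Fin N → Fin N → Fin N → Fin N → ℂ),
      (∑ k1 : Fin N, ∑ k2 : Fin N, ∑ k3 : Fin N, ∑ k4 : Fin N, G k1 k2 k3 k4)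
        = ∑ p : Fin N × Fin N × Fin N × Fin N, G p.1 p.2.1 p.2.2.1 p.2.2.2 := by
    intro G
    rw [Fintype.sum_prod_type]
    refine Finset.sum_congr rfl fun _ _ => ?_
    rw [Fintype.sum_prod_type]
    refine Finset.sum_congr rfl fun _ _ => ?_
    rw [Fintype.sum_prod_type]
  rw [l, l]
  exact Fintype.sum_equiv
    ⟨fun p => (p.2.2.2, p.2.2.1, p.2.1, p.1), fun p => (p.2.2.2, p.2.2.1, p.2.1, p.1),
      fun ⟨a,b,c,d⟩ => rfl, fun ⟨a,b,c,d⟩ => rfl⟩ _ _ (fun ⟨a,b,c,d⟩ => rfl)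

theorem trace_expand (φ : Fin N × Fin N → ℝ) :
    Matrix.trace ((uniMat N φ * (uniMat N φ)ᴴ)^4)
      = ∑ a : Fin N, ∑ b : Fin N, ∑ c : Fin N, ∑ d : Fin N,
          ∑ k1 : Fin N, ∑ k2 : Fin N, ∑ k3 : Fin N, ∑ k4 : Fin N, f8 a b c d k1 k2 k3 k4 φ := by
  have h4 : (uniMat N φ * (uniMat N φ)ᴴ)^4
      = (uniMat N φ * (uniMat N φ)ᴴ) * ((uniMat N φ * (uniMat N φ)ᴴ) *
        ((uniMat N φ * (uniMat N φ)ᴴ) * (uniMat N φ * (uniMat N φ)ᴴ))) := by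
    rw [pow_succ', pow_succ', pow_two]
  rw [h4, Matrix.trace]
  refine Finset.sum_congr rfl fun a _ => ?_
  simp only [Matrix.diag_apply, Matrix.mul_apply]
  simp only [hM, Finset.sum_mul, Finset.mul_sum]
  refine Finset.sum_congr rfl fun b _ => ?_
  refine Finset.sum_congr rfl fun c _ => ?_
  refine Finset.sum_congr rfl fun d _ => ?_
  conv_rhs => rw [sum4_rev]
  refine Finset.sum_congr rfl fun k1 _ => ?_
  refine Finset.sum_congr rfl fun k2 _ => ?_
  refine Finset.sum_congr rfl fun k3 _ => ?_
  refine Finset.sum_congr rfl fun k4 _ => ?_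
  simp only [f8, gfac, uniMat, Matrix.conjTranspose_apply, Matrix.of_apply]
  try ring

variable {N : ℕ}



theorem f8_eq_prod (a b c d k1 k2 k3 k4 : Fin N) (φ : Fin N × Fin N → ℝ) :
    f8 a b c d k1 k2 k3 k4 φ
      = ∏ p : Fin N × Fin N, Complex.exp (Complex.I * (eT a b c d k1 k2 k3 k4 p) * (φ p : ℂ)) := by
  have hstar : ∀ r : ℝ, star (Complex.exp (Complex.I * r)) = Complex.exp (-(Complex.I * r)) := by
    intro r
    rw [Complex.star_def, ← Complex.exp_conj]
    congr 1
    simp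
  have hsum : (∑ p : Fin N × Fin N, Complex.I * ((eT a b c d k1 k2 k3 k4 p : ℤ) : ℂ) * (φ p : ℂ))
      = Complex.I*(φ (a,k1):ℂ) + Complex.I*(φ (b,k2):ℂ) + Complex.I*(φ (c,k3):ℂ)
        + Complex.I*(φ (d,k4):ℂ) - Complex.I*(φ (b,k1):ℂ) - Complex.I*(φ (c,k2):ℂ)
        - Complex.I*(φ (d,k3):ℂ) - Complex.I*(φ (a,k4):ℂ) := by
    simp only [eT]
    push_cast
    simp only [mul_add, mul_sub, add_mul, sub_mul, mul_ite, ite_mul, mul_one, one_mul,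
      mul_zero, zero_mul, Finset.sum_add_distrib, Finset.sum_sub_distrib,
      Finset.sum_ite_eq', Finset.mem_univ, if_true]
  rw [← Complex.exp_sum, hsum]
  simp only [f8, gfac, hstar, ← Complex.exp_add]
  exact congrArg Complex.exp (by ring)

theorem f8_continuous (a b c d k1 k2 k3 k4 : Fin N) :
    Continuous (f8 a b c d k1 k2 k3 k4) := by
  unfold f8 gfac
  fun_prop

theorem f8_integrableOn (a b c d k1 k2 k3 k4 : Fin N) :
    IntegrableOn (f8 a b c d k1 k2 k3 k4)
      (Set.univ.pi fun _ : Fin N × Fin N => Set.Icc (0:ℝ) (2*Real.pi)) volume := by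
  apply (f8_continuous a b c d k1 k2 k3 k4).continuousOn.integrableOn_compact
  exact isCompact_univ_pi (fun _ => isCompact_Icc)


abbrev V4 (N : ℕ) := Fin N × Fin N × Fin N × Fin N

noncomputable def F8 (z : V4 N × V4 N) (φ : Fin N × Fin N → ℝ) : ℂ :=
  f8 z.1.1 z.1.2.1 z.1.2.2.1 z.1.2.2.2 z.2.1 z.2.2.1 z.2.2.2.1 z.2.2.2.2 φ

theorem sum8_flatten (G : Fin N → Fin N → Fin N → Fin N → Fin N → Fin N → Fin N → Fin N → ℂ) :
    (∑ z : V4 N × V4 N, G z.1.1 z.1.2.1 z.1.2.2.1 z.1.2.2.2 z.2.1 z.2.2.1 z.2.2.2.1 z.2.2.2.2)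
      = ∑ a : Fin N, ∑ b : Fin N, ∑ c : Fin N, ∑ d : Fin N,
          ∑ k1 : Fin N, ∑ k2 : Fin N, ∑ k3 : Fin N, ∑ k4 : Fin N, G a b c d k1 k2 k3 k4 := by
  simp only [Fintype.sum_prod_type]

theorem sum_swap_jk (G : V4 N → V4 N → ℂ) :
    (∑ z : V4 N × V4 N, G z.1 z.2) = ∑ k : V4 N, ∑ j : V4 N, G j k := by
  rw [Fintype.sum_prod_type]
  exact Finset.sum_comm


end AvgU4


/-- the average `⟨Tr ρ⁴⟩` over the unimodular ensemble equals `(14N³ − 28N² + 20N − 5)/N⁶`. -/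
theorem avg_fourth_moment_unimodular (N : ℕ) (hN : 1 ≤ N) :
    ((2 * Real.pi : ℂ) ^ (N ^ 2))⁻¹ *
        ∫ φ in Set.univ.pi fun _ : Fin N × Fin N => Set.Icc (0 : ℝ) (2 * Real.pi),
          Matrix.trace (uniRho N φ ^ 4) =
      (14 * N ^ 3 - 28 * N ^ 2 + 20 * N - 5) / (N : ℂ) ^ 6 := by
  classical
  have hNC : (N:ℂ) ≠ 0 := Nat.cast_ne_zero.mpr (by omega)
  have h2pi : (2*Real.pi:ℂ) ≠ 0 := by
    have : Real.pi ≠ 0 := Real.pi_ne_zero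
    simp [this]
  have hrho : ∀ φ : Fin N × Fin N → ℝ, Matrix.trace (uniRho N φ ^ 4)
      = (((N:ℂ)^2)⁻¹)^4 * ∑ z : AvgU4.V4 N × AvgU4.V4 N, AvgU4.F8 z φ := by
    intro φ
    rw [uniRho, smul_pow, Matrix.trace_smul, smul_eq_mul]
    congr 1
    rw [AvgU4.trace_expand φ, ← AvgU4.sum8_flatten (fun a b c d k1 k2 k3 k4 =>
      AvgU4.f8 a b c d k1 k2 k3 k4 φ)]
    rfl
  simp only [hrho]
  rw [MeasureTheory.integral_const_mul]
  rw [MeasureTheory.integral_finset_sum Finset.univ (fun z _ => by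
    have := AvgU4.f8_integrableOn (N := N) z.1.1 z.1.2.1 z.1.2.2.1 z.1.2.2.2
      z.2.1 z.2.2.1 z.2.2.2.1 z.2.2.2.2
    exact this)]
  have hint : ∀ z : AvgU4.V4 N × AvgU4.V4 N,
      (∫ φ in Set.univ.pi fun _ : Fin N × Fin N => Set.Icc (0 : ℝ) (2 * Real.pi),
        AvgU4.F8 z φ)
      = if (∀ p, AvgU4.eT z.1.1 z.1.2.1 z.1.2.2.1 z.1.2.2.2
            z.2.1 z.2.2.1 z.2.2.2.1 z.2.2.2.2 p = 0)
        then ((2*Real.pi : ℂ))^(N^2) else 0 := by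
    intro z
    simp only [AvgU4.F8, AvgU4.f8_eq_prod]
    exact AvgU4.integral_prod_box _
  simp only [hint]
  have hpull : ∀ (P : Prop) [Decidable P],
      (if P then ((2*Real.pi : ℂ))^(N^2) else 0)
        = ((2*Real.pi : ℂ))^(N^2) * (if P then 1 else 0) := by
    intro P _; split <;> simp
  simp only [hpull, ← Finset.mul_sum]
  have hcount : (∑ z : AvgU4.V4 N × AvgU4.V4 N,
      if (∀ p, AvgU4.eT z.1.1 z.1.2.1 z.1.2.2.1 z.1.2.2.2
          z.2.1 z.2.2.1 z.2.2.2.1 z.2.2.2.2 p = 0) then (1:ℂ) else 0)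
      = 14*(N:ℂ)^5 - 28*(N:ℂ)^4 + 20*(N:ℂ)^3 - 5*(N:ℂ)^2 := by
    rw [AvgU4.sum_swap_jk (fun j k =>
      if (∀ p, AvgU4.eT j.1 j.2.1 j.2.2.1 j.2.2.2 k.1 k.2.1 k.2.2.1 k.2.2.2 p = 0)
      then (1:ℂ) else 0)]
    have h1 : (∑ k1 : Fin N, ∑ k2 : Fin N, ∑ k3 : Fin N, ∑ k4 : Fin N, AvgU4.Fk N k1 k2 k3 k4)
        = ∑ k : AvgU4.V4 N, AvgU4.Fk N k.1 k.2.1 k.2.2.1 k.2.2.2 := by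
      simp only [Fintype.sum_prod_type]
    rw [← AvgU4.sum_Fk N, h1]
    refine Finset.sum_congr rfl fun k _ => ?_
    rw [show (∑ j : AvgU4.V4 N,
        if (∀ p, AvgU4.eT j.1 j.2.1 j.2.2.1 j.2.2.2 k.1 k.2.1 k.2.2.1 k.2.2.2 p = 0)
        then (1:ℂ) else 0)
      = ∑ a : Fin N, ∑ b : Fin N, ∑ c : Fin N, ∑ d : Fin N,
          if AvgU4.C a b c d k.1 k.2.1 k.2.2.1 k.2.2.2 then (1:ℂ) else 0 by
        simp only [Fintype.sum_prod_type]]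
    exact AvgU4.count_j _ _ _ _
  rw [hcount]
  field_simp
end

section
/- Let F be the Fourier matrix of order N², with entries F_{kl} = exp(2πi·kl/N²)/N for k,l ∈ {0,1,…,N²−1}. Then the reshuffled matrix F^R is unitary; equivalently, all N² singular values of F^R equal 1. -/
open Matrix

/-- Reshuffling of a matrix acting on a bipartite index set:
`(X^R)_{(m,μ),(n,ν)} = X_{(m,n),(μ,ν)}`. -/
def reshuffle {N : ℕ} (X : Matrix (Fin N × Fin N) (Fin N × Fin N) ℂ) :
    Matrix (Fin N × Fin N) (Fin N × Fin N) ℂ :=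
  Matrix.of fun p q => X (p.1, q.1) (p.2, q.2)

open Complex in
lemma sum_exp_fin (N : ℕ) (hN : 0 < N) (k : ℤ) :
    ∑ r : Fin N, Complex.exp (2 * (Real.pi : ℂ) * Complex.I * (k : ℂ) * ((r : ℕ) : ℂ) / (N : ℂ))
      = if (N : ℤ) ∣ k then (N : ℂ) else 0 := by
  have hNC : (N : ℂ) ≠ 0 := Nat.cast_ne_zero.mpr hN.ne'
  have h2pi : (2 * (Real.pi : ℂ) * Complex.I) ≠ 0 := by
    simp [Real.pi_ne_zero, Complex.I_ne_zero]
  set ζ : ℂ := Complex.exp (2 * (Real.pi : ℂ) * Complex.I * (k : ℂ) / (N : ℂ)) with hζ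
  have hterm : ∀ r : Fin N,
      Complex.exp (2 * (Real.pi : ℂ) * Complex.I * (k : ℂ) * ((r : ℕ) : ℂ) / (N : ℂ))
        = ζ ^ (r : ℕ) := by
    intro r
    rw [hζ, ← Complex.exp_nat_mul]
    ring_nf
  simp_rw [hterm]
  by_cases hdvd : (N : ℤ) ∣ k
  · obtain ⟨m, rfl⟩ := hdvd
    have hζ1 : ζ = 1 := by
      rw [hζ]
      have : 2 * (Real.pi : ℂ) * Complex.I * ((N * m : ℤ) : ℂ) / (N : ℂ)
          = (m : ℂ) * (2 * (Real.pi : ℂ) * Complex.I) := by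
        push_cast
        field_simp
      rw [this, Complex.exp_int_mul_two_pi_mul_I]
    simp [hζ1, if_pos (dvd_mul_right (N : ℤ) m)]
  · have hζN : ζ ^ N = 1 := by
      rw [hζ, ← Complex.exp_nat_mul]
      have : (N : ℂ) * (2 * (Real.pi : ℂ) * Complex.I * (k : ℂ) / (N : ℂ))
          = (k : ℂ) * (2 * (Real.pi : ℂ) * Complex.I) := by
        field_simp
      rw [this, Complex.exp_int_mul_two_pi_mul_I]
    have hζne : ζ ≠ 1 := by
      intro h
      rw [hζ, Complex.exp_eq_one_iff] at h
      obtain ⟨n, hn⟩ := h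
      have : (2 * (Real.pi : ℂ) * Complex.I) * (k : ℂ)
          = (2 * (Real.pi : ℂ) * Complex.I) * ((n : ℂ) * (N : ℂ)) := by
        field_simp at hn
        linear_combination (2 * (Real.pi : ℂ) * Complex.I) * hn
      have hk : (k : ℂ) = ((n * N : ℤ) : ℂ) := by
        push_cast
        exact mul_left_cancel₀ h2pi this
      have : k = n * N := by exact_mod_cast hk
      exact hdvd ⟨n, by linarith⟩
    rw [Fin.sum_univ_eq_sum_range (fun i => ζ ^ i), geom_sum_eq hζne, hζN]
    simp [if_neg hdvd]

lemma fin_dvd_iff {N : ℕ} (a b : Fin N) :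
    (N : ℤ) ∣ (((a : ℕ) : ℤ) - ((b : ℕ) : ℤ)) ↔ a = b := by
  constructor
  · intro h
    have ha := a.isLt
    have hb := b.isLt
    have h0 : (((a : ℕ) : ℤ) - ((b : ℕ) : ℤ)) = 0 := by
      refine Int.eq_zero_of_abs_lt_dvd h ?_
      rw [abs_lt]
      omega
    have : (a : ℕ) = (b : ℕ) := by omega
    exact Fin.ext this
  · rintro rfl; simp

/-- the reshuffling of the Fourier matrix of order `N²`, with entries
`F_{kl} = exp(2πi·kl/N²)/N` indexed via `k = N·m + μ`, is unitary. -/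
theorem reshuffled_fourier_unitary (N : ℕ) (hN : 0 < N)
    (F : Matrix (Fin N × Fin N) (Fin N × Fin N) ℂ)
    (hF : ∀ p q : Fin N × Fin N,
      F p q = (1 / (N : ℂ)) *
        Complex.exp (2 * (Real.pi : ℂ) * Complex.I *
          (((N * (p.1 : ℕ) + (p.2 : ℕ)) * (N * (q.1 : ℕ) + (q.2 : ℕ)) : ℕ) : ℂ) /
          (N : ℂ) ^ 2)) :
    reshuffle F ∈ Matrix.unitaryGroup (Fin N × Fin N) ℂ := by
  have hNC : (N : ℂ) ≠ 0 := Nat.cast_ne_zero.mpr hN.ne'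
  rw [Matrix.mem_unitaryGroup_iff]
  ext p q
  rw [Matrix.mul_apply]
  have key : ∀ r : Fin N × Fin N,
      reshuffle F p r * (star (reshuffle F)) r q
        = (1 / (N : ℂ))^2 *
          (Complex.exp (2 * (Real.pi : ℂ) * Complex.I *
              (((((p.2 : ℕ) : ℤ) - ((q.2 : ℕ) : ℤ)) : ℤ) : ℂ) * ((r.1 : ℕ) : ℂ) / (N : ℂ)) *
           Complex.exp (2 * (Real.pi : ℂ) * Complex.I *
              (((((p.1 : ℕ) : ℤ) - ((q.1 : ℕ) : ℤ)) : ℤ) : ℂ) * ((r.2 : ℕ) : ℂ) / (N : ℂ))) := by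
    intro r
    have hstar : (star (reshuffle F)) r q = (starRingEnd ℂ) (reshuffle F q r) := by
      simp [Matrix.star_apply]
    rw [hstar]
    show F (p.1, r.1) (p.2, r.2) * (starRingEnd ℂ) (F (q.1, r.1) (q.2, r.2)) = _
    rw [hF, hF]
    dsimp only
    rw [_root_.map_mul, ← Complex.exp_conj]
    have hconj : (starRingEnd ℂ) (2 * (Real.pi : ℂ) * Complex.I *
        (((N * (q.1 : ℕ) + (r.1 : ℕ)) * (N * (q.2 : ℕ) + (r.2 : ℕ)) : ℕ) : ℂ) / (N : ℂ) ^ 2)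
        = - (2 * (Real.pi : ℂ) * Complex.I *
        (((N * (q.1 : ℕ) + (r.1 : ℕ)) * (N * (q.2 : ℕ) + (r.2 : ℕ)) : ℕ) : ℂ) / (N : ℂ) ^ 2) := by
      simp only [map_div₀, _root_.map_mul, Complex.conj_I, map_ofNat, Complex.conj_natCast,
        map_pow]
      rw [Complex.conj_ofReal]
      ring
    rw [hconj]
    have hconj1 : (starRingEnd ℂ) (1 / (N : ℂ)) = 1 / (N : ℂ) := by
      rw [map_div₀, _root_.map_one, Complex.conj_natCast]
    rw [hconj1]
    rw [mul_mul_mul_comm, ← Complex.exp_add]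
    have harg : 2 * (Real.pi : ℂ) * Complex.I *
          (((N * (p.1 : ℕ) + (r.1 : ℕ)) * (N * (p.2 : ℕ) + (r.2 : ℕ)) : ℕ) : ℂ) / (N : ℂ) ^ 2 +
        - (2 * (Real.pi : ℂ) * Complex.I *
          (((N * (q.1 : ℕ) + (r.1 : ℕ)) * (N * (q.2 : ℕ) + (r.2 : ℕ)) : ℕ) : ℂ) / (N : ℂ) ^ 2)
        = (2 * (Real.pi : ℂ) * Complex.I *
              (((((p.2 : ℕ) : ℤ) - ((q.2 : ℕ) : ℤ)) : ℤ) : ℂ) * ((r.1 : ℕ) : ℂ) / (N : ℂ)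
           + 2 * (Real.pi : ℂ) * Complex.I *
              (((((p.1 : ℕ) : ℤ) - ((q.1 : ℕ) : ℤ)) : ℤ) : ℂ) * ((r.2 : ℕ) : ℂ) / (N : ℂ))
          + ((((p.1 : ℕ) : ℤ) * ((p.2 : ℕ) : ℤ) - ((q.1 : ℕ) : ℤ) * ((q.2 : ℕ) : ℤ) : ℤ) : ℂ)
            * (2 * (Real.pi : ℂ) * Complex.I) := by
      push_cast
      field_simp
      ring
    rw [harg, Complex.exp_add, Complex.exp_int_mul_two_pi_mul_I, mul_one, Complex.exp_add]
    ring
  simp_rw [key]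
  rw [← Finset.mul_sum, Fintype.sum_prod_type]
  dsimp only
  rw [← Finset.sum_mul_sum]
  rw [sum_exp_fin N hN, sum_exp_fin N hN]
  simp only [fin_dvd_iff]
  rw [Matrix.one_apply]
  by_cases h1 : p.2 = q.2 <;> by_cases h2 : p.1 = q.1
  · have : p = q := Prod.ext h2 h1
    rw [if_pos h1, if_pos h2, if_pos this]
    field_simp
  · have : p ≠ q := fun h => h2 (by rw [h])
    rw [if_pos h1, if_neg h2, if_neg this]; ring
  · have : p ≠ q := fun h => h1 (by rw [h])
    rw [if_neg h1, if_neg this]; ring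
  · have : p ≠ q := fun h => h1 (by rw [h])
    rw [if_neg h1, if_neg this]; ring
end

section
/- The integral over [0,1] of the function y ↦ −2 y log(y) / (π √(y(1−y))) equals log(4) − 1, where log denotes the natural logarithm. (This is the mean entropy of the arcsine eigenvalue distribution arising for the unimodular ensemble at N = 2.) -/
open Real MeasureTheory Set Filter Topology intervalIntegral

lemma II_log : IntervalIntegrable Real.log volume 0 (π/2) := by
  have h1 : IntervalIntegrable Real.log volume 0 1 := by
    have h : IntegrableOn (fun x : ℝ => -Real.log x) (Ioc 0 1) volume := by
      apply intervalIntegral.integrableOn_deriv_of_nonneg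
        (g := fun x => x - x * Real.log x)
      · exact (continuous_id.sub Real.continuous_mul_log).continuousOn
      · intro x hx
        have := (hasDerivAt_id x).sub (Real.hasDerivAt_mul_log hx.1.ne')
        exact this.congr_deriv (by ring)
      · intro x hx
        have := Real.log_neg hx.1 hx.2
        linarith
    rw [intervalIntegrable_iff_integrableOn_Ioc_of_le (by norm_num)]
    exact h.neg.congr (Filter.Eventually.of_forall (fun x => by simp))
  have h2 : IntervalIntegrable Real.log volume 1 (π/2) := by
    apply intervalIntegrable_log
    have : (1:ℝ) ≤ π/2 := by nlinarith [Real.pi_gt_three]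
    rw [uIcc_of_le this]
    rintro ⟨h0, -⟩; norm_num at h0
  exact h1.trans h2

lemma II_logsin : IntervalIntegrable (fun x => Real.log (Real.sin x)) volume 0 (π/2) := by
  have hpi : (0:ℝ) < π/2 := by positivity
  apply IntervalIntegrable.mono_fun' (g := fun x => Real.log (π/2) - Real.log x)
    (intervalIntegrable_const.sub II_log)
    ((Real.measurable_log.comp Real.measurable_sin).aestronglyMeasurable)
  rw [Filter.EventuallyLE, ae_restrict_iff' measurableSet_uIoc]
  apply Filter.Eventually.of_forall
  intro x hx
  rw [uIoc_of_le hpi.le] at hx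
  obtain ⟨h0, h1⟩ := hx
  have hsinpos : 0 < Real.sin x := Real.sin_pos_of_pos_of_lt_pi h0 (by linarith [Real.pi_pos])
  have hsin1 : Real.sin x ≤ 1 := Real.sin_le_one x
  have hlow : 2/π * x ≤ Real.sin x := Real.mul_le_sin h0.le h1
  have hxpos : (0:ℝ) < 2/π * x := by positivity
  have hlog1 : Real.log (2/π * x) ≤ Real.log (Real.sin x) := Real.log_le_log hxpos hlow
  have hlog2 : Real.log (Real.sin x) ≤ 0 := Real.log_nonpos hsinpos.le hsin1
  have hexp : Real.log (2/π * x) = Real.log x - Real.log (π/2) := by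
    rw [Real.log_mul (by positivity) h0.ne', show (2:ℝ)/π = (π/2)⁻¹ by field_simp,
      Real.log_inv]
    ring
  simp only [Function.comp, Real.norm_eq_abs, abs_of_nonpos hlog2]
  rw [hexp] at hlog1
  linarith

lemma II_logcos : IntervalIntegrable (fun x => Real.log (Real.cos x)) volume 0 (π/2) := by
  have h := (II_logsin.comp_sub_left (π/2)).symm
  simp only [sub_self, sub_zero] at h
  have : (fun x => Real.log (Real.sin (π/2 - x))) = fun x => Real.log (Real.cos x) :=
    funext fun x => by rw [Real.sin_pi_div_two_sub]
  rwa [this] at h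

lemma integral_logsin : ∫ x in (0:ℝ)..(π/2), Real.log (Real.sin x) = -(π/2) * Real.log 2 := by
  set J := ∫ x in (0:ℝ)..(π/2), Real.log (Real.sin x) with hJ
  -- ∫ log cos = J
  have hcos : ∫ x in (0:ℝ)..(π/2), Real.log (Real.cos x) = J := by
    have h := intervalIntegral.integral_comp_sub_left
      (a := 0) (b := π/2) (fun x => Real.log (Real.sin x)) (π/2)
    simp only [sub_self, sub_zero] at h
    rw [hJ, ← h]
    congr 1
    funext x
    rw [Real.sin_pi_div_two_sub]
  -- ∫_{π/2}^π log sin = J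
  have hupper : ∫ x in (π/2:ℝ)..π, Real.log (Real.sin x) = J := by
    have h := intervalIntegral.integral_comp_sub_left
      (a := 0) (b := π/2) (fun x => Real.log (Real.sin x)) π
    simp only [sub_zero] at h
    rw [show π - π/2 = π/2 by ring] at h
    rw [hJ, ← h]
    congr 1
    funext x
    rw [Real.sin_pi_sub]
  -- integrability on π/2..π
  have hIIupper : IntervalIntegrable (fun x => Real.log (Real.sin x)) volume (π/2) π := by
    have h := (II_logsin.comp_sub_left π).symm
    rw [show π - π/2 = π/2 by ring, sub_zero] at h
    have e : (fun x => Real.log (Real.sin (π - x))) = fun x => Real.log (Real.sin x) :=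
      funext fun x => by rw [Real.sin_pi_sub]
    rwa [e] at h
  -- ∫₀^π log sin = 2J
  have hfull : ∫ x in (0:ℝ)..π, Real.log (Real.sin x) = 2 * J := by
    rw [← intervalIntegral.integral_add_adjacent_intervals II_logsin hIIupper, hupper, ← hJ]
    ring
  -- double angle substitution
  have hdouble : ∫ x in (0:ℝ)..(π/2), Real.log (Real.sin (2*x)) = J := by
    have h := intervalIntegral.smul_integral_comp_mul_left
      (a := 0) (b := π/2) (fun x => Real.log (Real.sin x)) 2
    rw [mul_zero, show (2:ℝ) * (π/2) = π by ring, hfull] at h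
    simp only [smul_eq_mul] at h
    linarith
  -- pointwise identity a.e.
  have hae : ∫ x in (0:ℝ)..(π/2), Real.log (Real.sin (2*x)) =
      ∫ x in (0:ℝ)..(π/2), (Real.log 2 + Real.log (Real.sin x) + Real.log (Real.cos x)) := by
    apply intervalIntegral.integral_congr_ae
    have hne : ∀ᵐ x : ℝ, x ≠ π/2 := by
      rw [MeasureTheory.ae_iff]
      have : {x : ℝ | ¬ x ≠ π/2} = {π/2} := by ext; simp
      rw [this]
      exact Real.volume_singleton
    filter_upwards [hne] with x hne hx
    rw [uIoc_of_le (by positivity : (0:ℝ) ≤ π/2)] at hx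
    have hx2 : x < π/2 := lt_of_le_of_ne hx.2 hne
    have hs : 0 < Real.sin x := Real.sin_pos_of_pos_of_lt_pi hx.1 (by linarith [Real.pi_pos])
    have hx1 := hx.1
    have hc : 0 < Real.cos x := Real.cos_pos_of_mem_Ioo ⟨by linarith [Real.pi_pos], hx2⟩
    rw [Real.sin_two_mul, Real.log_mul (mul_ne_zero two_ne_zero hs.ne') hc.ne',
      Real.log_mul two_ne_zero hs.ne']
  have hsum : ∫ x in (0:ℝ)..(π/2), (Real.log 2 + Real.log (Real.sin x) + Real.log (Real.cos x)) =
      π/2 * Real.log 2 + J + J := by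
    rw [intervalIntegral.integral_add (intervalIntegrable_const.add II_logsin) II_logcos,
      intervalIntegral.integral_add intervalIntegrable_const II_logsin,
      intervalIntegral.integral_const, hcos, ← hJ]
    simp only [smul_eq_mul, sub_zero]
  rw [hae, hsum] at hdouble
  linarith

lemma II_cos2_logsin :
    IntervalIntegrable (fun x => Real.cos (2*x) * Real.log (Real.sin x)) volume 0 (π/2) :=
  II_logsin.continuousOn_mul ((Real.continuous_cos.comp (continuous_const.mul continuous_id)).continuousOn)

lemma integral_cos2_logsin :
    ∫ x in (0:ℝ)..(π/2), Real.cos (2*x) * Real.log (Real.sin x) = -(π/4) := by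
  have hpi : (0:ℝ) ≤ π/2 := by positivity
  have h := intervalIntegral.integral_eq_sub_of_hasDerivAt_of_le (a := 0) (b := π/2)
    (f := fun x => Real.cos x * (Real.sin x * Real.log (Real.sin x)) - x/2 - Real.sin (2*x)/4)
    (f' := fun x => Real.cos (2*x) * Real.log (Real.sin x))
    hpi
    (by
      apply Continuous.continuousOn
      exact ((Real.continuous_cos.mul (Real.continuous_mul_log.comp Real.continuous_sin)).sub
        (continuous_id.div_const 2)).sub
        ((Real.continuous_sin.comp (continuous_const.mul continuous_id)).div_const 4))
    (by
      intro x hx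
      have hs : 0 < Real.sin x := Real.sin_pos_of_pos_of_lt_pi hx.1 (by
        have := hx.2; linarith [Real.pi_pos])
      have h1 : HasDerivAt (fun x => Real.sin x * Real.log (Real.sin x))
          ((Real.log (Real.sin x) + 1) * Real.cos x) x :=
        (Real.hasDerivAt_mul_log hs.ne').comp x (Real.hasDerivAt_sin x)
      have h2 := (Real.hasDerivAt_cos x).mul h1
      have h3 : HasDerivAt (fun x : ℝ => x/2) (1/2) x := (hasDerivAt_id x).div_const 2
      have h4 : HasDerivAt (fun x : ℝ => Real.sin (2*x)/4) (Real.cos (2*x) * 2 / 4) x := by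
        have := (((Real.hasDerivAt_sin (2*x)).comp x ((hasDerivAt_id x).const_mul 2))).div_const 4
        simpa [Function.comp, mul_one] using this
      have h5 := (h2.sub h3).sub h4
      refine h5.congr_deriv ?_
      simp only [Real.cos_two_mul']
      linear_combination ((1/2) : ℝ) * (Real.sin_sq_add_cos_sq x)
      )
    II_cos2_logsin
  rw [h]
  norm_num
  rw [show 2*(π/2) = π by ring, Real.sin_pi]
  ring

lemma integral_sinsq_logsin :
    ∫ x in (0:ℝ)..(π/2), Real.sin x ^ 2 * Real.log (Real.sin x)
      = π/8 - π/4 * Real.log 2 := by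
  have hfe : (fun x => Real.sin x ^ 2 * Real.log (Real.sin x)) =
      fun x => (1/2 : ℝ) * Real.log (Real.sin x)
        - (1/2 : ℝ) * (Real.cos (2*x) * Real.log (Real.sin x)) := by
    funext x
    rw [Real.sin_sq_eq_half_sub]
    ring
  rw [hfe, intervalIntegral.integral_sub (II_logsin.const_mul _) (II_cos2_logsin.const_mul _),
    intervalIntegral.integral_const_mul, intervalIntegral.integral_const_mul,
    integral_logsin, integral_cos2_logsin]
  ring

noncomputable def gArc : ℝ → ℝ := fun y => (-2 * y * Real.log y) / (π * Real.sqrt (y * (1 - y)))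

lemma gArc_zero : gArc 0 = 0 := by simp [gArc]

lemma gArc_one : gArc 1 = 0 := by simp [gArc]

lemma gArc_eq {y : ℝ} (h0 : 0 < y) (h1 : y < 1) :
    gArc y = (-2/π) * (Real.log y * Real.sqrt y) / Real.sqrt (1 - y) := by
  have hy1 : (0:ℝ) < 1 - y := by linarith
  have hs : Real.sqrt y ≠ 0 := (Real.sqrt_pos.mpr h0).ne'
  have hs1 : Real.sqrt (1-y) ≠ 0 := (Real.sqrt_pos.mpr hy1).ne'
  have hsq : Real.sqrt y * Real.sqrt y = y := Real.mul_self_sqrt h0.le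
  rw [gArc, Real.sqrt_mul h0.le]
  rw [show -2 * y * Real.log y = -2 * (Real.sqrt y * Real.sqrt y) * Real.log y by rw [hsq]]
  field_simp

lemma gArc_tendsto_zero : Tendsto gArc (𝓝[>] (0:ℝ)) (𝓝 0) := by
  have h1 : Tendsto (fun y : ℝ => Real.log y * y ^ (1/2 : ℝ)) (𝓝[>] 0) (𝓝 0) :=
    tendsto_log_mul_rpow_nhdsGT_zero (by norm_num)
  have h2 : Tendsto (fun y : ℝ => Real.sqrt (1 - y)) (𝓝[>] (0:ℝ)) (𝓝 1) := by
    have : Tendsto (fun y : ℝ => Real.sqrt (1 - y)) (𝓝 (0:ℝ)) (𝓝 (Real.sqrt (1 - 0))) :=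
      (Real.continuous_sqrt.comp (continuous_const.sub continuous_id)).tendsto 0
    simpa using this.mono_left nhdsWithin_le_nhds
  have h3 : Tendsto (fun y : ℝ => (-2/π) * (Real.log y * y ^ (1/2:ℝ)) / Real.sqrt (1 - y))
      (𝓝[>] (0:ℝ)) (𝓝 0) := by
    have := ((h1.const_mul (-2/π)).div h2 one_ne_zero)
    simpa [Pi.div_def] using this
  apply h3.congr'
  filter_upwards [Ioo_mem_nhdsGT_of_mem (left_mem_Ico.mpr one_pos)] with y hy
  rw [gArc_eq hy.1 hy.2]
  simp only [Real.sqrt_eq_rpow]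

lemma gArc_tendsto_one : Tendsto gArc (𝓝[<] (1:ℝ)) (𝓝 0) := by
  have hslope : Tendsto (fun y : ℝ => Real.log y / (y - 1)) (𝓝[≠] (1:ℝ)) (𝓝 1) := by
    have h := hasDerivAt_iff_tendsto_slope.mp (Real.hasDerivAt_log one_ne_zero)
    simp only [inv_one] at h
    apply h.congr
    intro y
    rw [slope_def_field, Real.log_one, sub_zero]
  have hslope' : Tendsto (fun y : ℝ => Real.log y / (y - 1)) (𝓝[<] (1:ℝ)) (𝓝 1) :=
    hslope.mono_left (nhdsWithin_mono 1 (fun y hy => ne_of_lt hy))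
  have hsq : Tendsto (fun y : ℝ => Real.sqrt y) (𝓝[<] (1:ℝ)) (𝓝 1) := by
    have : Tendsto (fun y : ℝ => Real.sqrt y) (𝓝 (1:ℝ)) (𝓝 (Real.sqrt 1)) :=
      Real.continuous_sqrt.tendsto 1
    simpa using this.mono_left nhdsWithin_le_nhds
  have hsq1 : Tendsto (fun y : ℝ => Real.sqrt (1 - y)) (𝓝[<] (1:ℝ)) (𝓝 0) := by
    have : Tendsto (fun y : ℝ => Real.sqrt (1 - y)) (𝓝 (1:ℝ)) (𝓝 (Real.sqrt (1-1))) :=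
      (Real.continuous_sqrt.comp (continuous_const.sub continuous_id)).tendsto 1
    simpa using this.mono_left nhdsWithin_le_nhds
  have h3 : Tendsto (fun y : ℝ => (2/π) * Real.sqrt y * (Real.log y / (y-1)) * Real.sqrt (1-y))
      (𝓝[<] (1:ℝ)) (𝓝 0) := by
    have := (((hsq.const_mul (2/π)).mul hslope').mul hsq1)
    simpa using this
  apply h3.congr'
  filter_upwards [Ioo_mem_nhdsLT_of_mem (right_mem_Ioc.mpr one_pos)] with y hy
  have hy1 : (0:ℝ) < 1 - y := by linarith [hy.2]
  have hs1 : Real.sqrt (1-y) ≠ 0 := (Real.sqrt_pos.mpr hy1).ne'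
  have hne : y - 1 ≠ 0 := by intro h; apply hy1.ne'; linarith
  have hsqq : Real.sqrt (1-y) * Real.sqrt (1-y) = 1 - y := Real.mul_self_sqrt hy1.le
  rw [gArc_eq hy.1 hy.2]
  field_simp
  linear_combination (Real.sqrt y * Real.log y) * hsqq

lemma gArc_continuousOn : ContinuousOn gArc (Icc 0 1) := by
  intro y hy
  rcases eq_or_lt_of_le hy.1 with h0 | h0
  · -- y = 0
    subst h0
    rw [ContinuousWithinAt, gArc_zero]
    have hsub : Icc (0:ℝ) 1 ⊆ {0} ∪ Ioi 0 := by
      intro z hz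
      rcases eq_or_lt_of_le hz.1 with h | h
      · exact Or.inl (by simp [← h])
      · exact Or.inr h
    apply Tendsto.mono_left _ (nhdsWithin_mono 0 hsub)
    rw [nhdsWithin_union, nhdsWithin_singleton]
    rw [Filter.tendsto_sup]
    constructor
    · simpa [gArc_zero] using tendsto_pure_nhds gArc 0
    · exact gArc_tendsto_zero
  rcases eq_or_lt_of_le hy.2 with h1 | h1
  · -- y = 1
    subst h1
    rw [ContinuousWithinAt, gArc_one]
    have hsub : Icc (0:ℝ) 1 ⊆ Iio 1 ∪ {1} := by
      intro z hz
      rcases eq_or_lt_of_le hz.2 with h | h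
      · exact Or.inr (by simp [h])
      · exact Or.inl h
    apply Tendsto.mono_left _ (nhdsWithin_mono 1 hsub)
    rw [nhdsWithin_union, nhdsWithin_singleton]
    rw [Filter.tendsto_sup]
    constructor
    · exact gArc_tendsto_one
    · simpa [gArc_one] using tendsto_pure_nhds gArc 1
  · -- interior
    apply ContinuousAt.continuousWithinAt
    have hd : π * Real.sqrt (y * (1 - y)) ≠ 0 := by
      have : 0 < y * (1 - y) := by nlinarith
      have := Real.sqrt_pos.mpr this
      positivity
    apply ContinuousAt.div
    · exact (continuous_const.mul continuous_id).continuousAt.mul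
        (Real.continuousAt_log h0.ne')
    · exact (continuous_const.mul
        (Real.continuous_sqrt.comp (continuous_id.mul (continuous_const.sub continuous_id)))).continuousAt
    · exact hd

lemma integral_gArc :
    ∫ y in (0:ℝ)..1, gArc y
      = ∫ x in (0:ℝ)..(π/2), (-8/π) * (Real.sin x ^ 2 * Real.log (Real.sin x)) := by
  have h := intervalIntegral.integral_comp_smul_deriv' (a := 0) (b := (π/2))
    (f := fun θ => Real.sin θ ^ 2) (f' := fun θ => 2 * Real.sin θ * Real.cos θ) (g := gArc)
    (by
      intro θ _
      have := (Real.hasDerivAt_sin θ).pow 2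
      refine this.congr_deriv ?_
      push_cast
      ring)
    (by
      apply Continuous.continuousOn
      exact (continuous_const.mul Real.continuous_sin).mul Real.continuous_cos)
    (gArc_continuousOn.mono (by
      rintro y ⟨θ, -, rfl⟩
      exact ⟨sq_nonneg _, Real.sin_sq_le_one θ⟩))
  simp only [Real.sin_zero, Real.sin_pi_div_two] at h
  norm_num at h
  rw [← h]
  apply intervalIntegral.integral_congr
  intro x hx
  rw [uIcc_of_le (by positivity : (0:ℝ) ≤ π/2)] at hx
  simp only [Function.comp, smul_eq_mul]
  by_cases hs : Real.sin x = 0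
  · simp [hs, gArc_zero]
  by_cases hc : Real.cos x = 0
  · have h1 : Real.sin x ^ 2 = 1 := by
      have := Real.sin_sq_add_cos_sq x
      nlinarith
    rw [hc, h1, gArc_one]
    have : Real.sin x = 1 := by
      have hsn : 0 ≤ Real.sin x := Real.sin_nonneg_of_nonneg_of_le_pi hx.1
        (by linarith [hx.2, Real.pi_pos])
      nlinarith
    rw [this]
    simp
  · have hsn : 0 ≤ Real.sin x := Real.sin_nonneg_of_nonneg_of_le_pi hx.1
      (by linarith [hx.2, Real.pi_pos])
    have hcn : 0 ≤ Real.cos x := Real.cos_nonneg_of_mem_Icc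
      ⟨by linarith [hx.1, Real.pi_pos], hx.2⟩
    have hspos : 0 < Real.sin x := lt_of_le_of_ne hsn (Ne.symm hs)
    have hcpos : 0 < Real.cos x := lt_of_le_of_ne hcn (Ne.symm hc)
    have hsq : Real.sin x ^ 2 + Real.cos x ^ 2 = 1 := Real.sin_sq_add_cos_sq x
    have h0' : 0 < Real.sin x ^ 2 := by positivity
    have h1' : Real.sin x ^ 2 < 1 := by nlinarith
    rw [gArc_eq h0' h1']
    rw [show (1:ℝ) - Real.sin x ^ 2 = Real.cos x ^ 2 by linarith,
      Real.sqrt_sq hsn, Real.sqrt_sq hcn]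
    rw [Real.log_pow]
    push_cast
    field_simp
    ring

/-- the mean entropy of the arcsine eigenvalue distribution:
`∫₀¹ −2 y log y / (π √(y(1−y))) dy = log 4 − 1`. -/
theorem arcsine_mean_entropy :
    ∫ y in (0:ℝ)..1, (-2 * y * Real.log y) / (Real.pi * Real.sqrt (y * (1 - y))) =
      Real.log 4 - 1 := by
  have h0 : ∫ y in (0:ℝ)..1, (-2 * y * Real.log y) / (Real.pi * Real.sqrt (y * (1 - y)))
      = ∫ y in (0:ℝ)..1, gArc y := rfl
  rw [h0, integral_gArc, intervalIntegral.integral_const_mul, integral_sinsq_logsin]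
  have h4 : Real.log 4 = 2 * Real.log 2 := by
    rw [show (4:ℝ) = 2^2 by norm_num, Real.log_pow]
    push_cast
    ring
  rw [h4]
  have hπ := Real.pi_ne_zero
  field_simp
  ring
end

section
/- For every real number N > 1, the series Σ_{m=1}^{∞} 2 / (m(m+1)(m+2) · N^m) converges and its sum equals 3/2 − N − (N−1)² · log(1 − 1/N), where log denotes the natural logarithm. -/
/-- for real `N > 1`,
`Σ_{m=1}^∞ 2/(m(m+1)(m+2) N^m) = 3/2 − N − (N−1)² log(1 − 1/N)`. -/
theorem series_hypergeometric_derivative (N : ℝ) (hN : 1 < N) :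
    HasSum
      (fun m : ℕ =>
        2 / (((m : ℝ) + 1) * ((m : ℝ) + 2) * ((m : ℝ) + 3) * N ^ (m + 1)))
      (3 / 2 - N - (N - 1) ^ 2 * Real.log (1 - 1 / N)) := by
  have hN0 : (0:ℝ) < N := lt_trans one_pos hN
  set x : ℝ := 1 / N with hx
  have hx0 : 0 < x := by positivity
  have hx1 : x < 1 := by rw [hx, div_lt_one hN0]; exact hN
  have hxne : x ≠ 0 := ne_of_gt hx0
  have habs : |x| < 1 := by rw [abs_of_pos hx0]; exact hx1
  set L : ℝ := Real.log (1 - x) with hL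
  have hA : HasSum (fun n : ℕ => x ^ (n+1) / (n+1)) (-L) :=
    Real.hasSum_pow_div_log_of_abs_lt_one habs
  have hB : HasSum (fun n : ℕ => x ^ (n+1+1) / ((n:ℝ)+1+1)) (-L - x) := by
    have h2 : HasSum (fun n : ℕ => x ^ (n+1) / ((n:ℝ)+1))
        ((-L - x) + ∑ i ∈ Finset.range 1, x ^ (i+1)/((i:ℝ)+1)) := by
      convert hA using 1; simp
    have h := (hasSum_nat_add_iff 1).2 h2
    push_cast at h; convert h using 2
  have hC : HasSum (fun n : ℕ => x ^ (n+2+1) / ((n:ℝ)+2+1)) (-L - x - x^2/2) := by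
    have h2 : HasSum (fun n : ℕ => x ^ (n+1) / ((n:ℝ)+1))
        ((-L - x - x^2/2) + ∑ i ∈ Finset.range 2, x ^ (i+1)/((i:ℝ)+1)) := by
      convert hA using 1; simp [Finset.sum_range_succ]; ring
    have h := (hasSum_nat_add_iff 2).2 h2
    push_cast at h; convert h using 2
  have htot := (hA.sub (hB.mul_right (2/x))).add (hC.mul_right (1/x^2))
  convert htot using 1
  · rfl
  · funext m
    rw [hx]
    have h1 : (m:ℝ)+1 ≠ 0 := by positivity
    have h2 : (m:ℝ)+2 ≠ 0 := by positivity
    have h3 : (m:ℝ)+3 ≠ 0 := by positivity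
    have hNne : N ≠ 0 := ne_of_gt hN0
    simp only [div_pow, one_pow]
    field_simp
    ring
  · rw [hL, hx]
    have hNne : N ≠ 0 := ne_of_gt hN0
    field_simp
    ring
end
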